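/- arXiv:2308.04730 — 7 statements merged into one kernel-verified Lean document; each statement's English description precedes it below -/
import Mathlib

section
/- Let h > 0, T ∈ (0,∞], n ∈ ℕ, and ρ > 0. Then the pre-history map Θ : L_{2,ρ}(−h,T;ℝ^n) → L_{2,ρ}(0,T;L₂(−h,0;ℝ^n)), f ↦ (t ↦ f_{(t)}), is a bounded linear operator with operator norm at most 1/√(2ρ); explicitly, for every f ∈ L_{2,ρ}(−h,T;ℝ^n) one has ∫₀^T (∫_{−h}^0 ‖f(t+s)‖² ds) e^{−2ρt} dt ≤ (1/(2ρ)) ∫_{−h}^T ‖f(t)‖² e^{−2ρt} dt. -/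
open MeasureTheory Set
open scoped ENNReal

/-- **Norm bound for the pre-history map** (Theorem 2.1).
For `h > 0`, `T ∈ (0,∞]`, `ρ > 0` and `f ∈ L_{2,ρ}(-h,T;ℝⁿ)`, the pre-history map
`Θ f (t) = (s ↦ f (t+s))` satisfies `‖Θ f‖_{L_{2,ρ}(0,T;L₂(-h,0))} ≤ (2ρ)^{-1/2} ‖f‖_{L_{2,ρ}(-h,T)}`,
i.e. `∫₀ᵀ (∫_{-h}^0 ‖f(t+s)‖² ds) e^{-2ρt} dt ≤ (2ρ)⁻¹ ∫_{-h}^T ‖f(t)‖² e^{-2ρt} dt`. -/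
theorem stmt0 (h : ℝ) (hh : 0 < h) (T : ℝ≥0∞) (hT : 0 < T) (n : ℕ) (ρ : ℝ) (hρ : 0 < ρ)
    (f : ℝ → EuclideanSpace ℝ (Fin n))
    (hmeas : AEStronglyMeasurable f
      (volume.restrict {t : ℝ | -h < t ∧ ENNReal.ofReal t < T}))
    (hmem : (∫⁻ t in {t : ℝ | -h < t ∧ ENNReal.ofReal t < T},
        ENNReal.ofReal (‖f t‖ ^ 2 * Real.exp (-2 * ρ * t))) ≠ ⊤) :
    (∫⁻ t in {t : ℝ | 0 < t ∧ ENNReal.ofReal t < T},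
        (∫⁻ s in Set.Ioo (-h) (0 : ℝ), ENNReal.ofReal (‖f (t + s)‖ ^ 2)) *
          ENNReal.ofReal (Real.exp (-2 * ρ * t)))
      ≤ ENNReal.ofReal (1 / (2 * ρ)) *
        ∫⁻ t in {t : ℝ | -h < t ∧ ENNReal.ofReal t < T},
          ENNReal.ofReal (‖f t‖ ^ 2 * Real.exp (-2 * ρ * t)) := by
  set S : Set ℝ := {t : ℝ | -h < t ∧ ENNReal.ofReal t < T} with hSdef
  set A : Set ℝ := {t : ℝ | 0 < t ∧ ENNReal.ofReal t < T} with hAdef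
  have hTmeas : MeasurableSet {t : ℝ | ENNReal.ofReal t < T} :=
    ENNReal.measurable_ofReal measurableSet_Iio
  have hSmeas : MeasurableSet S := (measurableSet_Ioi (a := -h)).inter hTmeas
  have hAmeas : MeasurableSet A := (measurableSet_Ioi (a := (0:ℝ))).inter hTmeas
  -- measurable representative
  set g : ℝ → EuclideanSpace ℝ (Fin n) := hmeas.mk f with hgdef
  have hg : StronglyMeasurable g := hmeas.stronglyMeasurable_mk
  have hfg : ∀ᵐ u ∂(volume.restrict S), f u = g u := hmeas.ae_eq_mk
  set G : ℝ → ℝ≥0∞ := fun u => ENNReal.ofReal (‖g u‖ ^ 2) with hGdef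
  set E : ℝ → ℝ≥0∞ := fun t => ENNReal.ofReal (Real.exp (-2 * ρ * t)) with hEdef
  have hGm : Measurable G :=
    ENNReal.measurable_ofReal.comp (hg.measurable.norm.pow_const 2)
  have hEm : Measurable E :=
    ENNReal.measurable_ofReal.comp ((measurable_const.mul measurable_id).exp)
  -- null set where f ≠ g
  have hN : volume ({u : ℝ | f u ≠ g u} ∩ S) = 0 := by
    have := ae_iff.mp hfg
    rwa [Measure.restrict_apply' hSmeas] at this
  -- membership : t ∈ A, s ∈ Ioo(-h,0) → t+s ∈ S
  have hmem_add : ∀ t ∈ A, ∀ s ∈ Ioo (-h) (0:ℝ), t + s ∈ S := by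
    intro t ht s hs
    refine ⟨by linarith [ht.1, hs.1], lt_of_le_of_lt ?_ ht.2⟩
    exact ENNReal.ofReal_le_ofReal (by linarith [hs.2])
  -- RHS equals J
  set J : ℝ≥0∞ := ∫⁻ u in S, G u * E u with hJdef
  have hRHS : (∫⁻ t in S, ENNReal.ofReal (‖f t‖ ^ 2 * Real.exp (-2 * ρ * t))) = J := by
    refine lintegral_congr_ae (hfg.mono fun u hu => ?_)
    show ENNReal.ofReal (‖f u‖ ^ 2 * Real.exp (-2 * ρ * u)) = G u * E u
    rw [hu, ENNReal.ofReal_mul (by positivity)]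
  rw [hRHS]
  -- LHS rewrite: f → g inside
  have hLHS : (∫⁻ t in A,
      (∫⁻ s in Ioo (-h) (0:ℝ), ENNReal.ofReal (‖f (t + s)‖ ^ 2)) * E t)
      = ∫⁻ t in A, (∫⁻ s in Ioo (-h) (0:ℝ), G (t + s)) * E t := by
    refine setLIntegral_congr_fun hAmeas (fun t ht => ?_)
    congr 1
    refine lintegral_congr_ae ?_
    have hnull : volume ((fun s => t + s) ⁻¹' ({u : ℝ | f u ≠ g u} ∩ S)) = 0 := by
      rw [measure_preimage_add]; exact hN
    rw [Filter.EventuallyEq, ae_restrict_iff' measurableSet_Ioo, ae_iff]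
    refine measure_mono_null ?_ hnull
    intro s hs
    simp only [mem_setOf_eq, not_forall] at hs
    obtain ⟨hsIoo, hne⟩ := hs
    exact ⟨fun hEq => hne (by rw [hGdef, hEq]), hmem_add t ht s hsIoo⟩
  rw [hLHS]
  -- push the exponential factor inside the inner integral
  have hpush : (∫⁻ t in A, (∫⁻ s in Ioo (-h) (0:ℝ), G (t + s)) * E t)
      = ∫⁻ t in A, ∫⁻ s in Ioo (-h) (0:ℝ), G (t + s) * E t := by
    refine lintegral_congr fun t => ?_
    rw [← lintegral_mul_const (E t) (f := fun s => G (t + s)) (hGm.comp (measurable_const.add measurable_id))]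
  rw [hpush]
  -- Tonelli swap
  have hswap : (∫⁻ t in A, ∫⁻ s in Ioo (-h) (0:ℝ), G (t + s) * E t)
      = ∫⁻ s in Ioo (-h) (0:ℝ), ∫⁻ t in A, G (t + s) * E t := by
    refine lintegral_lintegral_swap ?_
    exact ((hGm.comp (measurable_fst.add measurable_snd)).mul
      (hEm.comp measurable_fst)).aemeasurable
  rw [hswap]
  -- inner bound for each s
  set K : ℝ → ℝ≥0∞ := Set.indicator S (fun u => G u * E u) with hKdef
  have hKm : Measurable K := (hGm.mul hEm).indicator hSmeas
  have hinner : ∀ s ∈ Ioo (-h) (0:ℝ),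
      (∫⁻ t in A, G (t + s) * E t) ≤ ENNReal.ofReal (Real.exp (2 * ρ * s)) * J := by
    intro s hs
    have hstep : ∀ t ∈ A, G (t + s) * E t
        = ENNReal.ofReal (Real.exp (2 * ρ * s)) * K (t + s) := by
      intro t ht
      have hts : t + s ∈ S := hmem_add t ht s hs
      rw [hKdef, Set.indicator_of_mem hts]
      have : E t = ENNReal.ofReal (Real.exp (2 * ρ * s)) * E (t + s) := by
        rw [hEdef]
        simp only
        rw [← ENNReal.ofReal_mul (Real.exp_pos _).le, ← Real.exp_add]
        ring_nf
      rw [this]; ring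
    calc (∫⁻ t in A, G (t + s) * E t)
        = ∫⁻ t in A, ENNReal.ofReal (Real.exp (2 * ρ * s)) * K (t + s) :=
          setLIntegral_congr_fun hAmeas hstep
      _ = ENNReal.ofReal (Real.exp (2 * ρ * s)) * ∫⁻ t in A, K (t + s) :=
          lintegral_const_mul (f := fun t => K (t + s)) _ (hKm.comp (measurable_id.add measurable_const))
      _ ≤ ENNReal.ofReal (Real.exp (2 * ρ * s)) * ∫⁻ t, K (t + s) := by
          gcongr; exact Measure.restrict_le_self
      _ = ENNReal.ofReal (Real.exp (2 * ρ * s)) * ∫⁻ u, K u := by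
          rw [lintegral_add_right_eq_self K s]
      _ = ENNReal.ofReal (Real.exp (2 * ρ * s)) * J := by
          rw [hKdef, lintegral_indicator hSmeas]
  -- the exponential integral bound
  have hexp : (∫⁻ s in Ioo (-h) (0:ℝ), ENNReal.ofReal (Real.exp (2 * ρ * s)))
      ≤ ENNReal.ofReal (1 / (2 * ρ)) := by
    have hint : IntegrableOn (fun s => Real.exp (2 * ρ * s)) (Ioo (-h) 0) :=
      ((Real.continuous_exp.comp (continuous_const.mul continuous_id)).integrableOn_Icc).mono_set
        Ioo_subset_Icc_self
    rw [← ofReal_integral_eq_lintegral_ofReal hint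
      (Filter.Eventually.of_forall fun s => (Real.exp_pos _).le)]
    apply ENNReal.ofReal_le_ofReal
    have h2ρ : (0:ℝ) < 2 * ρ := by positivity
    have hle : -h ≤ (0:ℝ) := by linarith
    rw [← integral_Ioc_eq_integral_Ioo, ← intervalIntegral.integral_of_le hle]
    rw [intervalIntegral.integral_comp_mul_left (f := Real.exp) (ne_of_gt h2ρ)]
    rw [integral_exp]
    rw [smul_eq_mul, mul_zero, Real.exp_zero]
    have hEp : (0:ℝ) ≤ Real.exp (2 * ρ * -h) := (Real.exp_pos _).le
    have : (2 * ρ)⁻¹ * (1 - Real.exp (2 * ρ * -h)) ≤ (2 * ρ)⁻¹ * 1 :=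
      mul_le_mul_of_nonneg_left (by linarith) (inv_nonneg.mpr h2ρ.le)
    simpa [one_div] using this
  -- put it together
  calc (∫⁻ s in Ioo (-h) (0:ℝ), ∫⁻ t in A, G (t + s) * E t)
      ≤ ∫⁻ s in Ioo (-h) (0:ℝ), ENNReal.ofReal (Real.exp (2 * ρ * s)) * J :=
        setLIntegral_mono' measurableSet_Ioo hinner
    _ = (∫⁻ s in Ioo (-h) (0:ℝ), ENNReal.ofReal (Real.exp (2 * ρ * s))) * J :=
        lintegral_mul_const _ (ENNReal.measurable_ofReal.comp
          ((measurable_const.mul measurable_id).exp))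
    _ ≤ ENNReal.ofReal (1 / (2 * ρ)) * J := mul_le_mul' hexp le_rfl
end

section
/- Let h, β > 0 and n ∈ ℕ. Let g : ℝ^n → ℝ^n and r : H¹(−h,0;ℝ^n) → [−h,0] both be Lipschitz continuous (r with respect to the H¹ norm). Then the map f : V_β → ℝ^n, f(φ) := g(φ(r(φ))) = (g ∘ ev ∘ (id × r))(φ), satisfies ‖f‖_Lip ≤ ‖g‖_Lip · (2h^{1/2} + β‖r‖_Lip + h^{−1/2}); that is, for all φ, ψ ∈ V_β one has ‖g(φ(r(φ))) − g(ψ(r(ψ)))‖ ≤ ‖g‖_Lip (2√h + β‖r‖_Lip + 1/√h) ‖φ − ψ‖_{H¹}. -/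
open MeasureTheory Set Filter

section Prelims

variable {E : Type*} [NormedAddCommGroup E] [NormedSpace ℝ E]

/-- `f` belongs to `H¹(a,b;E)` with weak derivative `f'`; `f` is identified with its
continuous representative, so that the fundamental theorem of calculus holds. -/
structure MemH1 (a b : ℝ) (f f' : ℝ → E) : Prop where
  contOn : ContinuousOn f (Set.Icc a b)
  memL2 : MeasureTheory.MemLp f 2 (MeasureTheory.volume.restrict (Set.Ioo a b))
  derivMemL2 : MeasureTheory.MemLp f' 2 (MeasureTheory.volume.restrict (Set.Ioo a b))
  ftc : ∀ t ∈ Set.Icc a b, f t = f a + ∫ s in a..t, f' s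

/-- The `H¹(a,b)`-norm of a function `f` with weak derivative `f'`. -/
noncomputable def H1norm (a b : ℝ) (f f' : ℝ → E) : ℝ :=
  Real.sqrt ((∫ t in Set.Ioo a b, ‖f t‖ ^ 2) + ∫ t in Set.Ioo a b, ‖f' t‖ ^ 2)

/-- Membership in `V_β = {ψ ∈ H¹(-h,0;E) : ‖ψ'‖_∞ ≤ β}`. -/
def VbetaMem (h β : ℝ) (ψ ψ' : ℝ → E) : Prop :=
  MemH1 (-h) 0 ψ ψ' ∧
    ∀ᵐ t ∂(MeasureTheory.volume.restrict (Set.Ioo (-h) (0 : ℝ))), ‖ψ' t‖ ≤ β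

/-- The pre-history of `x` at time `t`: `s ↦ x (t + s)`. -/
def prehist (x : ℝ → E) (t : ℝ) : ℝ → E := fun s => x (t + s)

end Prelims

section Aux

variable {E : Type*} [NormedAddCommGroup E] [NormedSpace ℝ E]

lemma finRestrict (a b : ℝ) : IsFiniteMeasure (volume.restrict (Set.Ioo a b)) := by
  constructor
  rw [Measure.restrict_apply_univ, Real.volume_Ioo]
  exact ENNReal.ofReal_lt_top

lemma intIntegrable_of_memL2 {a b : ℝ} {f : ℝ → E}
    (hf : MemLp f 2 (volume.restrict (Set.Ioo a b)))
    {c d : ℝ} (hc : c ∈ Set.Icc a b) (hd : d ∈ Set.Icc a b) :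
    IntervalIntegrable f volume c d := by
  haveI := finRestrict a b
  have h1 : IntegrableOn f (Set.Ioo a b) volume := hf.integrable one_le_two
  have h2 : IntegrableOn f (Set.Ioc a b) volume :=
    (integrableOn_Ioc_iff_integrableOn_Ioo).2 h1
  rw [intervalIntegrable_iff]
  refine h2.mono_set ?_
  rw [Set.uIoc]
  exact Set.Ioc_subset_Ioc (le_min hc.1 hd.1) (max_le hc.2 hd.2)

lemma integral_norm_le_CS {a b : ℝ} (hab : a ≤ b) {f : ℝ → E}
    (hf : MemLp f 2 (volume.restrict (Set.Ioo a b))) :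
    ∫ t in Set.Ioo a b, ‖f t‖ ≤
      Real.sqrt (b - a) * Real.sqrt (∫ t in Set.Ioo a b, ‖f t‖ ^ 2) := by
  haveI := finRestrict a b
  have hpq : Real.HolderConjugate 2 2 := ⟨by norm_num, by norm_num, by norm_num⟩
  have h1 : MemLp (fun t => ‖f t‖) (ENNReal.ofReal 2) (volume.restrict (Set.Ioo a b)) := by
    simpa using hf.norm
  have h2 : MemLp (fun _ : ℝ => (1:ℝ)) (ENNReal.ofReal 2) (volume.restrict (Set.Ioo a b)) := by
    exact memLp_const 1
  have := integral_mul_le_Lp_mul_Lq_of_nonneg hpq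
    (Filter.Eventually.of_forall fun t => norm_nonneg (f t))
    (Filter.Eventually.of_forall fun _ => zero_le_one) h1 h2
  simp only [mul_one, Real.one_rpow, integral_const, Measure.restrict_apply_univ,
    Real.volume_Ioo, smul_eq_mul, mul_one] at this
  have hnn : (0:ℝ) ≤ ∫ t in Set.Ioo a b, ‖f t‖ ^ 2 :=
    integral_nonneg fun t => sq_nonneg _
  have e1 : ∫ (t : ℝ) in Set.Ioo a b, ‖f t‖ ^ (2:ℝ) = ∫ t in Set.Ioo a b, ‖f t‖ ^ 2 := by
    refine integral_congr_ae (Filter.Eventually.of_forall fun t => ?_)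
    show ‖f t‖ ^ (2:ℝ) = ‖f t‖ ^ (2:ℕ)
    rw [← Real.rpow_natCast (‖f t‖) 2]
    norm_num
  rw [e1] at this
  refine this.trans (le_of_eq ?_)
  rw [Real.sqrt_eq_rpow, Real.sqrt_eq_rpow, measureReal_def, Measure.restrict_apply_univ, Real.volume_Ioo, ENNReal.toReal_ofReal (by linarith), mul_comm]


lemma MemH1.sub {a b : ℝ} (hab : a ≤ b) {f f' g g' : ℝ → E}
    (hf : MemH1 a b f f') (hg : MemH1 a b g g') : MemH1 a b (f - g) (f' - g') := by
  refine ⟨hf.contOn.sub hg.contOn, hf.memL2.sub hg.memL2,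
    hf.derivMemL2.sub hg.derivMemL2, fun t ht => ?_⟩
  have hif : IntervalIntegrable f' volume a t :=
    intIntegrable_of_memL2 hf.derivMemL2 ⟨le_refl a, hab⟩ ht
  have hig : IntervalIntegrable g' volume a t :=
    intIntegrable_of_memL2 hg.derivMemL2 ⟨le_refl a, hab⟩ ht
  have := intervalIntegral.integral_sub hif hig
  simp only [Pi.sub_apply]
  rw [hf.ftc t ht, hg.ftc t ht, this]
  abel

lemma MemH1.sub_pt {a b : ℝ} (hab : a ≤ b) {f f' : ℝ → E} (hf : MemH1 a b f f')
    {s t : ℝ} (hs : s ∈ Set.Icc a b) (ht : t ∈ Set.Icc a b) :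
    f t - f s = ∫ u in s..t, f' u := by
  have hif : IntervalIntegrable f' volume a t :=
    intIntegrable_of_memL2 hf.derivMemL2 ⟨le_refl a, hab⟩ ht
  have hig : IntervalIntegrable f' volume a s :=
    intIntegrable_of_memL2 hf.derivMemL2 ⟨le_refl a, hab⟩ hs
  rw [hf.ftc t ht, hf.ftc s hs]
  rw [show f a + (∫ u in a..t, f' u) - (f a + ∫ u in a..s, f' u)
      = (∫ u in a..t, f' u) - ∫ u in a..s, f' u by abel]
  exact intervalIntegral.integral_interval_sub_left hif hig

lemma sup_bound {h : ℝ} (hh : 0 < h) {w wd : ℝ → E} (hw : MemH1 (-h) 0 w wd)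
    {t : ℝ} (ht : t ∈ Set.Icc (-h) 0) :
    ‖w t‖ ≤ (1 / Real.sqrt h) * Real.sqrt (∫ s in Set.Ioo (-h) 0, ‖w s‖ ^ 2)
      + Real.sqrt h * Real.sqrt (∫ s in Set.Ioo (-h) 0, ‖wd s‖ ^ 2) := by
  haveI := finRestrict (-h) (0:ℝ)
  have hab : (-h : ℝ) ≤ 0 := by linarith
  set C : ℝ := ∫ s in Set.Ioo (-h) (0:ℝ), ‖wd s‖ with hC
  have hwdInt : IntegrableOn wd (Set.Ioo (-h) (0:ℝ)) volume :=
    hw.derivMemL2.integrable one_le_two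
  have hwInt : IntegrableOn w (Set.Ioo (-h) (0:ℝ)) volume :=
    hw.memL2.integrable one_le_two
  -- pointwise bound
  have hpt : ∀ s ∈ Set.Ioo (-h) (0:ℝ), ‖w t‖ ≤ ‖w s‖ + C := by
    intro s hs
    have hsI : s ∈ Set.Icc (-h) (0:ℝ) := Set.Ioo_subset_Icc_self hs
    have h1 : w t - w s = ∫ u in s..t, wd u := hw.sub_pt hab hsI ht
    have h2 : ‖∫ u in s..t, wd u‖ ≤ ∫ u in Set.uIoc s t, ‖wd u‖ :=
      intervalIntegral.norm_integral_le_integral_norm_uIoc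
    have h3 : ∫ u in Set.uIoc s t, ‖wd u‖ ≤ C := by
      refine setIntegral_mono_set hwdInt.norm
        (Filter.Eventually.of_forall fun u => norm_nonneg _) ?_
      have hsub : Set.uIoc s t ⊆ Set.Ioc (-h) (0:ℝ) := by
        rw [Set.uIoc]
        exact Set.Ioc_subset_Ioc (le_min hsI.1 ht.1) (max_le hsI.2 ht.2)
      exact hsub.eventuallyLE.trans Ioo_ae_eq_Ioc.symm.le
    have h4 : ‖w t‖ ≤ ‖w s‖ + ‖w t - w s‖ := by
      have := norm_add_le (w s) (w t - w s); simpa using this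
    calc ‖w t‖ ≤ ‖w s‖ + ‖w t - w s‖ := h4
      _ = ‖w s‖ + ‖∫ u in s..t, wd u‖ := by rw [h1]
      _ ≤ ‖w s‖ + C := by linarith [h2.trans h3]
  -- integrate over s
  have hint : ∫ s in Set.Ioo (-h) (0:ℝ), ‖w t‖ ≤ ∫ s in Set.Ioo (-h) (0:ℝ), (‖w s‖ + C) := by
    refine setIntegral_mono_on (integrableOn_const (lt_top_iff_ne_top.1 ?_))
      (hwInt.norm.add (integrableOn_const (lt_top_iff_ne_top.1 ?_))) measurableSet_Ioo hpt
    · rw [Real.volume_Ioo]; exact ENNReal.ofReal_lt_top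
    · rw [Real.volume_Ioo]; exact ENNReal.ofReal_lt_top
  have hvol : (volume (Set.Ioo (-h) (0:ℝ))).toReal = h := by
    rw [Real.volume_Ioo, ENNReal.toReal_ofReal (by linarith)]; ring
  rw [setIntegral_const, measureReal_def, hvol, smul_eq_mul] at hint
  rw [integral_add hwInt.norm (integrableOn_const (lt_top_iff_ne_top.1 (by
    rw [Real.volume_Ioo]; exact ENNReal.ofReal_lt_top))), setIntegral_const, measureReal_def, hvol,
    smul_eq_mul] at hint
  -- Cauchy-Schwarz
  have hCS1 : ∫ s in Set.Ioo (-h) (0:ℝ), ‖w s‖ ≤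
      Real.sqrt h * Real.sqrt (∫ s in Set.Ioo (-h) 0, ‖w s‖ ^ 2) := by
    have := integral_norm_le_CS hab hw.memL2
    rwa [show (0:ℝ) - (-h) = h by ring] at this
  have hCS2 : C ≤ Real.sqrt h * Real.sqrt (∫ s in Set.Ioo (-h) 0, ‖wd s‖ ^ 2) := by
    have := integral_norm_le_CS hab hw.derivMemL2
    rwa [show (0:ℝ) - (-h) = h by ring] at this
  have hsq : Real.sqrt h * Real.sqrt h = h := Real.mul_self_sqrt hh.le
  have hsqpos : 0 < Real.sqrt h := Real.sqrt_pos.2 hh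
  have hA : (0:ℝ) ≤ Real.sqrt (∫ s in Set.Ioo (-h) 0, ‖w s‖ ^ 2) := Real.sqrt_nonneg _
  have hB : (0:ℝ) ≤ Real.sqrt (∫ s in Set.Ioo (-h) 0, ‖wd s‖ ^ 2) := Real.sqrt_nonneg _
  have hdiv : h * (1 / Real.sqrt h) = Real.sqrt h := by
    rw [mul_one_div, div_eq_iff hsqpos.ne']; exact hsq.symm
  refine le_of_mul_le_mul_left ?_ hh
  have h5 : h * C ≤ h * (Real.sqrt h * Real.sqrt (∫ s in Set.Ioo (-h) 0, ‖wd s‖ ^ 2)) :=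
    mul_le_mul_of_nonneg_left hCS2 hh.le
  calc h * ‖w t‖ ≤ Real.sqrt h * Real.sqrt (∫ s in Set.Ioo (-h) 0, ‖w s‖ ^ 2)
      + h * (Real.sqrt h * Real.sqrt (∫ s in Set.Ioo (-h) 0, ‖wd s‖ ^ 2)) := by linarith
    _ = h * ((1 / Real.sqrt h) * Real.sqrt (∫ s in Set.Ioo (-h) 0, ‖w s‖ ^ 2)
      + Real.sqrt h * Real.sqrt (∫ s in Set.Ioo (-h) 0, ‖wd s‖ ^ 2)) := by
      linear_combination (-Real.sqrt (∫ s in Set.Ioo (-h) 0, ‖w s‖ ^ 2)) * hdiv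

end Aux

/-- **Key estimate** (Theorem 3.2). If `g : ℝⁿ → ℝⁿ` and the delay functional
`r : H¹(-h,0;ℝⁿ) → [-h,0]` are Lipschitz continuous, then
`f = g ∘ ev ∘ (id × r)`, i.e. `φ ↦ g (φ (r φ))`, is Lipschitz continuous on `V_β` with
`‖f‖_Lip ≤ ‖g‖_Lip (2 h^{1/2} + β ‖r‖_Lip + h^{-1/2})`. -/
theorem stmt2 (h β : ℝ) (hh : 0 < h) (hβ : 0 < β) (n : ℕ)
    (g : EuclideanSpace ℝ (Fin n) → EuclideanSpace ℝ (Fin n))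
    (Lg : ℝ) (hLg : 0 ≤ Lg) (hg : ∀ x y, ‖g x - g y‖ ≤ Lg * ‖x - y‖)
    (r : (ℝ → EuclideanSpace ℝ (Fin n)) → ℝ)
    (hr_range : ∀ ψ, r ψ ∈ Set.Icc (-h) 0)
    (Lr : ℝ) (hLr : 0 ≤ Lr)
    (hr : ∀ φ φd ψ ψd, MemH1 (-h) 0 φ φd → MemH1 (-h) 0 ψ ψd →
      |r φ - r ψ| ≤ Lr * H1norm (-h) 0 (φ - ψ) (φd - ψd)) :
    ∀ φ φd ψ ψd, VbetaMem h β φ φd → VbetaMem h β ψ ψd →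
      ‖g (φ (r φ)) - g (ψ (r ψ))‖ ≤
        Lg * (2 * Real.sqrt h + β * Lr + 1 / Real.sqrt h) *
          H1norm (-h) 0 (φ - ψ) (φd - ψd) := by
  intro φ φd ψ ψd hφ hψ
  obtain ⟨hφH, hφβ⟩ := hφ
  obtain ⟨hψH, hψβ⟩ := hψ
  have hab : (-h:ℝ) ≤ 0 := by linarith
  have ht₁ : r φ ∈ Set.Icc (-h) 0 := hr_range φ
  have ht₂ : r ψ ∈ Set.Icc (-h) 0 := hr_range ψ
  set N := H1norm (-h) 0 (φ - ψ) (φd - ψd) with hN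
  have hw : MemH1 (-h) 0 (φ - ψ) (φd - ψd) := hφH.sub hab hψH
  have hAnn : (0:ℝ) ≤ ∫ t in Set.Ioo (-h) (0:ℝ), ‖(φ - ψ) t‖ ^ 2 :=
    integral_nonneg fun t => sq_nonneg _
  have hBnn : (0:ℝ) ≤ ∫ t in Set.Ioo (-h) (0:ℝ), ‖(φd - ψd) t‖ ^ 2 :=
    integral_nonneg fun t => sq_nonneg _
  have hNA : Real.sqrt (∫ t in Set.Ioo (-h) 0, ‖(φ - ψ) t‖ ^ 2) ≤ N :=
    Real.sqrt_le_sqrt (le_add_of_nonneg_right hBnn)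
  have hNB : Real.sqrt (∫ t in Set.Ioo (-h) 0, ‖(φd - ψd) t‖ ^ 2) ≤ N :=
    Real.sqrt_le_sqrt (le_add_of_nonneg_left hAnn)
  have hN0 : (0:ℝ) ≤ N := Real.sqrt_nonneg _
  have hsqnn : (0:ℝ) ≤ Real.sqrt h := Real.sqrt_nonneg _
  -- bound 1
  have hrr : |r φ - r ψ| ≤ Lr * N := hr φ φd ψ ψd hφH hψH
  have hb1 : ‖φ (r φ) - φ (r ψ)‖ ≤ β * |r φ - r ψ| := by
    rw [hφH.sub_pt hab ht₂ ht₁]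
    have hae : ∀ᵐ u ∂(volume.restrict (Set.uIoc (r ψ) (r φ))), ‖φd u‖ ≤ β := by
      have hsub : Set.uIoc (r ψ) (r φ) ⊆ Set.Ioc (-h) (0:ℝ) := by
        rw [Set.uIoc]; exact Set.Ioc_subset_Ioc (le_min ht₂.1 ht₁.1) (max_le ht₂.2 ht₁.2)
      refine ae_restrict_of_ae_restrict_of_subset hsub ?_
      rwa [Measure.restrict_congr_set (Ioo_ae_eq_Ioc (a := -h) (b := (0:ℝ)))] at hφβ
    calc ‖∫ u in (r ψ)..(r φ), φd u‖ ≤ |∫ _u in (r ψ)..(r φ), (β:ℝ)| :=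
          intervalIntegral.norm_integral_le_abs_of_norm_le hae intervalIntegrable_const
      _ = β * |r φ - r ψ| := by
          rw [intervalIntegral.integral_const, smul_eq_mul, abs_mul, abs_of_nonneg hβ.le,
            mul_comm]
  -- bound 2
  have hb2 : ‖φ (r ψ) - ψ (r ψ)‖ ≤ (1 / Real.sqrt h) * N + Real.sqrt h * N := by
    have hsup := sup_bound hh hw ht₂
    have hpt : (φ - ψ) (r ψ) = φ (r ψ) - ψ (r ψ) := rfl
    rw [hpt] at hsup
    refine hsup.trans (add_le_add ?_ ?_)
    · exact mul_le_mul_of_nonneg_left hNA (by positivity)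
    · exact mul_le_mul_of_nonneg_left hNB hsqnn
  -- combine
  have hsplit : g (φ (r φ)) - g (ψ (r ψ))
      = (g (φ (r φ)) - g (φ (r ψ))) + (g (φ (r ψ)) - g (ψ (r ψ))) := by abel
  calc ‖g (φ (r φ)) - g (ψ (r ψ))‖
      ≤ ‖g (φ (r φ)) - g (φ (r ψ))‖ + ‖g (φ (r ψ)) - g (ψ (r ψ))‖ := by
        rw [hsplit]; exact norm_add_le _ _
    _ ≤ Lg * ‖φ (r φ) - φ (r ψ)‖ + Lg * ‖φ (r ψ) - ψ (r ψ)‖ := add_le_add (hg _ _) (hg _ _)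
    _ ≤ Lg * (β * (Lr * N)) + Lg * ((1 / Real.sqrt h) * N + Real.sqrt h * N) := by
        refine add_le_add (mul_le_mul_of_nonneg_left ?_ hLg) (mul_le_mul_of_nonneg_left hb2 hLg)
        exact hb1.trans (mul_le_mul_of_nonneg_left hrr hβ.le)
    _ ≤ Lg * (2 * Real.sqrt h + β * Lr + 1 / Real.sqrt h) * N := by
        nlinarith [mul_nonneg (mul_nonneg hLg hsqnn) hN0]
end

section
/- (Sharpness of the Lipschitz assumption on the pre-history.) Let h = 2 and define φ : [−2,0] → ℝ by φ(t) = −1 for −2 ≤ t < −1, φ(t) = 3(t+1)^{2/3} − 1 for −1 ≤ t ≤ −(√27−1)/√27, and φ(t) = (√27/(√27−1)) t + 1 for −(√27−1)/√27 < t ≤ 0. Then: (i) φ ∈ H¹(−2,0) but φ is not Lipschitz continuous (its derivative blows up at t = −1); (ii) there exists T > 0 such that the two distinct functions x₁(t) = 1 + t and x₂(t) = 1 + t − t³ on [0,T], each extended by φ on [−2,0], both belong to H¹(−2,T) and both satisfy the state-dependent delay equation x′(t) = −x(t − min{|x(t)|, 2}) for t ∈ (0,T) with pre-history x_{(0)}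 = φ. In particular, uniqueness of solutions fails for this H¹ pre-history. -/
open MeasureTheory Set Filter

/-- The non-Lipschitz pre-history of Example 4.3. -/
noncomputable def phi7 (t : ℝ) : ℝ :=
  if t < -1 then -1
  else if t ≤ -(Real.sqrt 27 - 1) / Real.sqrt 27 then 3 * (t + 1) ^ ((2 : ℝ) / 3) - 1
  else Real.sqrt 27 / (Real.sqrt 27 - 1) * t + 1

/-- The first solution: `φ` extended by `1 + t`. -/
noncomputable def x71 : ℝ → ℝ := fun t => if t ≤ 0 then phi7 t else 1 + t

/-- The second solution: `φ` extended by `1 + t - t³`. -/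
noncomputable def x72 : ℝ → ℝ := fun t => if t ≤ 0 then phi7 t else 1 + t - t ^ 3

noncomputable def bpt : ℝ := -(Real.sqrt 27 - 1) / Real.sqrt 27
noncomputable def slp : ℝ := Real.sqrt 27 / (Real.sqrt 27 - 1)

lemma s27_mem : (5:ℝ) ≤ Real.sqrt 27 ∧ Real.sqrt 27 ≤ 6 := by
  have h := Real.sq_sqrt (by norm_num : (0:ℝ) ≤ 27)
  have h2 := Real.sqrt_nonneg 27
  constructor <;> nlinarith

lemma bpt_add_one : bpt + 1 = (Real.sqrt 27)⁻¹ := by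
  have h5 := s27_mem.1
  have hs : Real.sqrt 27 ≠ 0 := by linarith
  unfold bpt
  field_simp
  ring

lemma bpt_mem : -1 < bpt ∧ bpt < 0 := by
  have h5 := s27_mem.1
  have h1 := bpt_add_one
  have : (0:ℝ) < (Real.sqrt 27)⁻¹ := by positivity
  have : (Real.sqrt 27)⁻¹ < 1 := by
    rw [inv_lt_one_iff₀]; right; linarith
  constructor <;> linarith

lemma key23 : ((Real.sqrt 27)⁻¹ : ℝ) ^ ((2:ℝ)/3) = 1/3 := by
  have h27 : Real.sqrt 27 = (3:ℝ) ^ ((3:ℝ)/2) := by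
    rw [show (27:ℝ) = 3^(3:ℕ) by norm_num, Real.sqrt_eq_rpow, ← Real.rpow_natCast 3 3,
      ← Real.rpow_mul (by norm_num)]
    norm_num
  rw [h27, ← Real.rpow_neg (by norm_num), ← Real.rpow_mul (by norm_num),
    show -((3:ℝ)/2) * (2/3) = -1 by ring, Real.rpow_neg_one]
  norm_num

lemma phi7_of_le_neg_one {t : ℝ} (ht : t ≤ -1) : phi7 t = -1 := by
  rcases lt_or_eq_of_le ht with h | h
  · simp [phi7, h]
  · subst h
    rw [phi7, if_neg (lt_irrefl (-1:ℝ)),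
      if_pos (show ((-1:ℝ) ≤ -(Real.sqrt 27 - 1) / Real.sqrt 27) from le_of_lt bpt_mem.1)]
    norm_num [Real.zero_rpow]

lemma phi7_mid {t : ℝ} (h1 : -1 ≤ t) (h2 : t ≤ bpt) : phi7 t = 3 * (t + 1) ^ ((2:ℝ)/3) - 1 := by
  have : ¬ t < -1 := not_lt.2 h1
  simp only [phi7, if_neg this]
  rw [if_pos (show t ≤ -(Real.sqrt 27 - 1) / Real.sqrt 27 from h2)]

lemma phi7_hi {t : ℝ} (h : bpt < t) : phi7 t = slp * t + 1 := by
  have h1 : ¬ t < -1 := not_lt.2 (le_of_lt (lt_trans bpt_mem.1 h))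
  simp only [phi7, if_neg h1]
  rw [if_neg (show ¬ t ≤ -(Real.sqrt 27 - 1) / Real.sqrt 27 from not_le.2 h)]
  rfl

lemma phi7_bpt : phi7 bpt = 0 := by
  rw [phi7_mid (le_of_lt bpt_mem.1) le_rfl, bpt_add_one, key23]; norm_num

lemma slp_bpt : slp * bpt + 1 = 0 := by
  have h5 := s27_mem.1
  have hs : Real.sqrt 27 ≠ 0 := by linarith
  have hs1 : Real.sqrt 27 - 1 ≠ 0 := by intro h; nlinarith
  unfold slp bpt
  field_simp
  ring

lemma phi7_zero : phi7 0 = 1 := by rw [phi7_hi bpt_mem.2]; ring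

lemma phi7_neg_one : phi7 (-1) = -1 := phi7_of_le_neg_one le_rfl

/-- the weak derivative of phi7 -/
noncomputable def phid (t : ℝ) : ℝ :=
  if t < -1 then 0
  else if t ≤ bpt then 2 * (t + 1) ^ (-(1:ℝ)/3) else slp

lemma phid_meas : Measurable phid := by
  unfold phid
  apply Measurable.ite (measurableSet_lt measurable_id measurable_const) measurable_const
  apply Measurable.ite (measurableSet_le measurable_id measurable_const) _ measurable_const
  fun_prop

lemma phid_of_le_neg_one {t : ℝ} (ht : t ≤ -1) : phid t = 0 := by
  rcases lt_or_eq_of_le ht with h | h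
  · simp [phid, h]
  · subst h
    rw [phid, if_neg (lt_irrefl (-1:ℝ)), if_pos (le_of_lt bpt_mem.1)]
    norm_num [Real.zero_rpow]

lemma phid_mid {t : ℝ} (h1 : -1 ≤ t) (h2 : t ≤ bpt) : phid t = 2 * (t + 1) ^ (-(1:ℝ)/3) := by
  rw [phid, if_neg (not_lt.2 h1), if_pos h2]

lemma cont_phi7 : Continuous phi7 := by
  have hg : Continuous (fun t : ℝ => 3 * (t + 1) ^ ((2:ℝ)/3) - 1) := by
    have : Continuous (fun x : ℝ => x ^ ((2:ℝ)/3)) := Real.continuous_rpow_const (by norm_num)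
    fun_prop
  have hl : Continuous (fun t : ℝ => slp * t + 1) := by fun_prop
  have hinner : Continuous (fun t : ℝ => if t ≤ bpt then 3 * (t + 1) ^ ((2:ℝ)/3) - 1
      else slp * t + 1) := by
    apply Continuous.if_le hg hl continuous_id continuous_const
    intro x hx
    simp only [id_eq] at hx
    rw [hx, bpt_add_one, key23]
    have := slp_bpt
    linarith
  have : phi7 = fun t : ℝ => if (-1:ℝ) ≤ t then (if t ≤ bpt then 3 * (t + 1) ^ ((2:ℝ)/3) - 1
      else slp * t + 1) else -1 := by
    funext t
    rcases lt_or_ge t (-1) with h | h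
    · rw [if_neg (not_le.2 h), phi7_of_le_neg_one h.le]
    · rw [if_pos h]
      rcases le_or_gt t bpt with h2 | h2
      · rw [if_pos h2, phi7_mid h h2]
      · rw [if_neg (not_le.2 h2), phi7_hi h2]
  rw [this]
  refine Continuous.if_le hinner continuous_const continuous_const continuous_id ?_
  intro x hx
  rw [← hx, if_pos (le_of_lt bpt_mem.1)]
  norm_num [Real.zero_rpow]

lemma cont_x71 : Continuous x71 := by
  apply Continuous.if_le cont_phi7 (by fun_prop) continuous_id continuous_const
  intro x hx; simp only [id_eq] at hx; rw [hx, phi7_zero]; norm_num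

lemma cont_x72 : Continuous x72 := by
  apply Continuous.if_le cont_phi7 (by fun_prop) continuous_id continuous_const
  intro x hx; simp only [id_eq] at hx; rw [hx, phi7_zero]; norm_num

lemma phid_hi {t : ℝ} (h : bpt < t) : phid t = slp := by
  rw [phid, if_neg (not_lt.2 (le_of_lt (lt_trans bpt_mem.1 h))), if_neg (not_le.2 h)]

lemma rpow_intOn (r : ℝ) (hr : -1 < r) (c : ℝ) (hc : -1 ≤ c) :
    IntegrableOn (fun t : ℝ => (t + 1) ^ r) (Ioc (-1) c) := by
  have h1 : IntervalIntegrable (fun x : ℝ => x ^ r) volume 0 (c + 1) :=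
    intervalIntegral.intervalIntegrable_rpow' hr
  have h2 := h1.comp_add_right 1
  simp only [zero_sub] at h2
  rw [← intervalIntegrable_iff_integrableOn_Ioc_of_le hc]
  have h3 : c + 1 - 1 = c := by ring
  rw [h3] at h2
  exact h2

lemma split_Ioc : Ioc (-2:ℝ) 0 = Ioc (-2) (-1) ∪ (Ioc (-1) bpt ∪ Ioc bpt 0) := by
  rw [Ioc_union_Ioc_eq_Ioc (le_of_lt bpt_mem.1) (le_of_lt bpt_mem.2),
    Ioc_union_Ioc_eq_Ioc (by norm_num) (by norm_num : (-1:ℝ) ≤ 0)]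

lemma intOn_phid : IntegrableOn phid (Ioc (-2:ℝ) 0) := by
  rw [split_Ioc]
  apply IntegrableOn.union
  · exact ((integrableOn_const measure_Ioc_lt_top.ne) :
      IntegrableOn (fun _ => (0:ℝ)) _ _).congr_fun
      (fun t ht => (phid_of_le_neg_one ht.2).symm) measurableSet_Ioc
  apply IntegrableOn.union
  · have h : IntegrableOn (fun x : ℝ => 2 * (x + 1) ^ (-(1:ℝ)/3)) (Ioc (-1) bpt) volume :=
      (rpow_intOn _ (by norm_num) bpt (le_of_lt bpt_mem.1)).const_mul 2
    exact h.congr_fun (fun t ht => (phid_mid ht.1.le ht.2).symm) measurableSet_Ioc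
  · exact ((integrableOn_const measure_Ioc_lt_top.ne) :
      IntegrableOn (fun _ => slp) _ _).congr_fun
      (fun t ht => (phid_hi ht.1).symm) measurableSet_Ioc

lemma intOn_phid_sq : IntegrableOn (fun t => phid t ^ 2) (Ioc (-2:ℝ) 0) := by
  rw [split_Ioc]
  apply IntegrableOn.union
  · refine ((integrableOn_const measure_Ioc_lt_top.ne) :
      IntegrableOn (fun _ => (0:ℝ)) _ _).congr_fun
      (fun t ht => by rw [phid_of_le_neg_one ht.2]; norm_num) measurableSet_Ioc
  apply IntegrableOn.union
  · have h : IntegrableOn (fun x : ℝ => 4 * (x + 1) ^ (-(2:ℝ)/3)) (Ioc (-1) bpt) volume :=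
      (rpow_intOn (-(2:ℝ)/3) (by norm_num) bpt (le_of_lt bpt_mem.1)).const_mul 4
    refine h.congr_fun (fun t ht => ?_) measurableSet_Ioc
    rw [phid_mid ht.1.le ht.2, mul_pow, ← Real.rpow_natCast ((t+1) ^ (-(1:ℝ)/3)) 2,
      ← Real.rpow_mul (by linarith [ht.1] : (0:ℝ) ≤ t + 1)]
    norm_num
  · exact ((integrableOn_const measure_Ioc_lt_top.ne) :
      IntegrableOn (fun _ => slp ^ 2) _ _).congr_fun
      (fun t ht => by rw [phid_hi ht.1]) measurableSet_Ioc

lemma memL2_of_cont {f : ℝ → ℝ} (hf : Continuous f) (a b : ℝ) :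
    MemLp f 2 (volume.restrict (Ioo a b)) := by
  obtain ⟨C, hC⟩ := IsCompact.exists_bound_of_continuousOn isCompact_Icc
    (hf.continuousOn : ContinuousOn f (Icc a b))
  refine MemLp.of_bound hf.aestronglyMeasurable C ?_
  rw [ae_restrict_iff' measurableSet_Ioo]
  exact ae_of_all _ fun x hx => hC x (Ioo_subset_Icc_self hx)

lemma phid_memL2 : MemLp phid 2 (volume.restrict (Ioo (-2:ℝ) 0)) := by
  rw [memLp_two_iff_integrable_sq phid_meas.aestronglyMeasurable]
  exact (intOn_phid_sq.mono_set Ioo_subset_Ioc_self)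

lemma phid_ii {a c : ℝ} (h1 : -2 ≤ a) (h2 : a ≤ c) (h3 : c ≤ 0) :
    IntervalIntegrable phid volume a c := by
  rw [intervalIntegrable_iff_integrableOn_Ioc_of_le h2]
  exact intOn_phid.mono_set (Ioc_subset_Ioc h1 h3)

lemma I1 : ∫ s in (-2:ℝ)..(-1), phid s = 0 := by
  rw [intervalIntegral.integral_congr (g := fun _ => (0:ℝ))
    (fun s hs => by
      rw [uIcc_of_le (by norm_num : (-2:ℝ) ≤ -1)] at hs
      exact phid_of_le_neg_one hs.2)]
  simp

lemma I2 {t : ℝ} (h : -1 ≤ t) (h' : t ≤ bpt) :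
    ∫ s in (-1:ℝ)..t, phid s = 3 * (t + 1) ^ ((2:ℝ)/3) := by
  rw [intervalIntegral.integral_congr (g := fun s => 2 * (s + 1) ^ (-(1:ℝ)/3))
    (fun s hs => by
      rw [uIcc_of_le h] at hs
      exact phid_mid hs.1 (le_trans hs.2 h'))]
  have hc : ∀ s : ℝ, 2 * (s + 1) ^ (-(1:ℝ)/3) = (fun x : ℝ => 2 * x ^ (-(1:ℝ)/3)) (s + 1) := by
    intro s; rfl
  rw [show (fun s : ℝ => 2 * (s + 1) ^ (-(1:ℝ)/3)) = fun s : ℝ =>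
    (fun x : ℝ => 2 * x ^ (-(1:ℝ)/3)) (s + 1) from rfl]
  rw [intervalIntegral.integral_comp_add_right (fun x : ℝ => 2 * x ^ (-(1:ℝ)/3)) 1]
  rw [intervalIntegral.integral_const_mul, integral_rpow (Or.inl (by norm_num))]
  have hz : ((-1:ℝ) + 1) ^ (-(1:ℝ)/3 + 1) = 0 := by
    norm_num
  rw [hz, show (-(1:ℝ)/3 + 1) = 2/3 by norm_num]
  ring

lemma I3 {t : ℝ} (h : bpt ≤ t) : ∫ s in bpt..t, phid s = slp * (t - bpt) := by
  rw [intervalIntegral.integral_congr_ae (g := fun _ => slp)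
    (MeasureTheory.ae_of_all _ (fun s hs => by
      rw [uIoc_of_le h] at hs
      exact phid_hi hs.1))]
  simp [mul_comm]

lemma int_phid {t : ℝ} (ht1 : -2 ≤ t) (ht2 : t ≤ 0) :
    ∫ s in (-2:ℝ)..t, phid s = phi7 t + 1 := by
  rcases le_or_gt t (-1) with h | h
  · rw [intervalIntegral.integral_congr (g := fun _ => (0:ℝ))
      (fun s hs => by
        rw [uIcc_of_le ht1] at hs
        exact phid_of_le_neg_one (le_trans hs.2 h))]
    rw [phi7_of_le_neg_one h]
    simp
  rcases le_or_gt t bpt with h2 | h2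
  · rw [← intervalIntegral.integral_add_adjacent_intervals
      (phid_ii (by norm_num) (by norm_num) (by norm_num) : IntervalIntegrable phid volume (-2) (-1))
      (phid_ii (by norm_num) h.le (le_trans h2 bpt_mem.2.le)),
      I1, I2 h.le h2, phi7_mid h.le h2]
    ring
  · rw [← intervalIntegral.integral_add_adjacent_intervals
      (phid_ii (by norm_num) (by linarith [bpt_mem.1] : (-2:ℝ) ≤ bpt) bpt_mem.2.le) (phid_ii (by linarith [bpt_mem.1]) h2.le ht2),
      ← intervalIntegral.integral_add_adjacent_intervals
      (phid_ii (by norm_num) (by norm_num) (by norm_num) : IntervalIntegrable phid volume (-2) (-1))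
      (phid_ii (by norm_num) bpt_mem.1.le bpt_mem.2.le),
      I1, I2 bpt_mem.1.le le_rfl, I3 h2.le, phi7_hi h2, bpt_add_one, key23]
    have := slp_bpt
    ring_nf
    linarith

lemma phi7_neg_two : phi7 (-2) = -1 := phi7_of_le_neg_one (by norm_num)

lemma memH1_phi7 : MemH1 (-2) 0 phi7 phid := by
  refine ⟨cont_phi7.continuousOn, memL2_of_cont cont_phi7 _ _, phid_memL2, ?_⟩
  intro t ht
  rw [phi7_neg_two, int_phid ht.1 ht.2]
  ring

/-- the derivatives of the extensions -/
noncomputable def d71 : ℝ → ℝ := fun t => if t ≤ 0 then phid t else 1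
noncomputable def d72 : ℝ → ℝ := fun t => if t ≤ 0 then phid t else 1 - 3 * t ^ 2

lemma d71_memL2 : MemLp d71 2 (volume.restrict (Ioo (-2:ℝ) (1/2))) := by
  have hm : Measurable d71 :=
    Measurable.ite (measurableSet_le measurable_id measurable_const) phid_meas measurable_const
  rw [memLp_two_iff_integrable_sq hm.aestronglyMeasurable]
  have hsplit : Ioc (-2:ℝ) (1/2) = Ioc (-2) 0 ∪ Ioc 0 (1/2) := by
    rw [Ioc_union_Ioc_eq_Ioc (by norm_num) (by norm_num)]
  refine IntegrableOn.mono_set ?_ (Ioo_subset_Ioc_self.trans hsplit.le)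
  apply IntegrableOn.union
  · exact intOn_phid_sq.congr_fun
      (fun t ht => by rw [d71, if_pos ht.2]) measurableSet_Ioc
  · exact ((integrableOn_const measure_Ioc_lt_top.ne) :
      IntegrableOn (fun _ => (1:ℝ)^2) _ _).congr_fun
      (fun t ht => by rw [d71, if_neg (not_le.2 ht.1)]) measurableSet_Ioc

lemma d72_memL2 : MemLp d72 2 (volume.restrict (Ioo (-2:ℝ) (1/2))) := by
  have hm : Measurable d72 :=
    Measurable.ite (measurableSet_le measurable_id measurable_const) phid_meas (by fun_prop)
  rw [memLp_two_iff_integrable_sq hm.aestronglyMeasurable]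
  have hsplit : Ioc (-2:ℝ) (1/2) = Ioc (-2) 0 ∪ Ioc 0 (1/2) := by
    rw [Ioc_union_Ioc_eq_Ioc (by norm_num) (by norm_num)]
  refine IntegrableOn.mono_set ?_ (Ioo_subset_Ioc_self.trans hsplit.le)
  apply IntegrableOn.union
  · exact intOn_phid_sq.congr_fun
      (fun t ht => by rw [d72, if_pos ht.2]) measurableSet_Ioc
  · exact ((Continuous.integrableOn_Ioc (by fun_prop)) :
      IntegrableOn (fun t : ℝ => (1 - 3 * t ^ 2)^2) _ _).congr_fun
      (fun t ht => by rw [d72, if_neg (not_le.2 ht.1)]) measurableSet_Ioc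

lemma d71_ii {a c : ℝ} (h1 : -2 ≤ a) (h2 : a ≤ c) (h3 : c ≤ 1/2) :
    IntervalIntegrable d71 volume a c := by
  rw [intervalIntegrable_iff_integrableOn_Ioc_of_le h2]
  have hsplit : Ioc (-2:ℝ) (1/2) = Ioc (-2) 0 ∪ Ioc 0 (1/2) := by
    rw [Ioc_union_Ioc_eq_Ioc (by norm_num) (by norm_num)]
  refine IntegrableOn.mono_set ?_ ((Ioc_subset_Ioc h1 h3).trans hsplit.le)
  apply IntegrableOn.union
  · exact intOn_phid.congr_fun (fun t ht => by rw [d71, if_pos ht.2]) measurableSet_Ioc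
  · exact ((integrableOn_const measure_Ioc_lt_top.ne) :
      IntegrableOn (fun _ => (1:ℝ)) _ _).congr_fun
      (fun t ht => by rw [d71, if_neg (not_le.2 ht.1)]) measurableSet_Ioc

lemma d72_ii {a c : ℝ} (h1 : -2 ≤ a) (h2 : a ≤ c) (h3 : c ≤ 1/2) :
    IntervalIntegrable d72 volume a c := by
  rw [intervalIntegrable_iff_integrableOn_Ioc_of_le h2]
  have hsplit : Ioc (-2:ℝ) (1/2) = Ioc (-2) 0 ∪ Ioc 0 (1/2) := by
    rw [Ioc_union_Ioc_eq_Ioc (by norm_num) (by norm_num)]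
  refine IntegrableOn.mono_set ?_ ((Ioc_subset_Ioc h1 h3).trans hsplit.le)
  apply IntegrableOn.union
  · exact intOn_phid.congr_fun (fun t ht => by rw [d72, if_pos ht.2]) measurableSet_Ioc
  · exact ((Continuous.integrableOn_Ioc (by fun_prop)) :
      IntegrableOn (fun t : ℝ => 1 - 3 * t ^ 2) _ _).congr_fun
      (fun t ht => by rw [d72, if_neg (not_le.2 ht.1)]) measurableSet_Ioc

lemma int_d71 {t : ℝ} (ht1 : -2 ≤ t) (ht2 : t ≤ 1/2) :
    ∫ s in (-2:ℝ)..t, d71 s = x71 t + 1 := by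
  rcases le_or_gt t 0 with h | h
  · rw [intervalIntegral.integral_congr (g := phid)
      (fun s hs => by
        rw [uIcc_of_le ht1] at hs
        rw [d71, if_pos (le_trans hs.2 h)]),
      int_phid ht1 h, x71, if_pos h]
  · rw [← intervalIntegral.integral_add_adjacent_intervals
      (d71_ii (by norm_num) (by norm_num) (by norm_num) : IntervalIntegrable d71 volume (-2) 0)
      (d71_ii (by norm_num) h.le ht2),
      intervalIntegral.integral_congr (g := phid) (a := (-2:ℝ)) (b := (0:ℝ))
      (fun s hs => by
        rw [uIcc_of_le (by norm_num : (-2:ℝ) ≤ 0)] at hs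
        rw [d71, if_pos hs.2]),
      int_phid (by norm_num) le_rfl, phi7_zero,
      intervalIntegral.integral_congr_ae (g := fun _ => (1:ℝ))
      (MeasureTheory.ae_of_all _ (fun s hs => by
        rw [uIoc_of_le h.le] at hs
        rw [d71, if_neg (not_le.2 hs.1)])),
      x71, if_neg (not_le.2 h)]
    simp
    ring

lemma int_d72 {t : ℝ} (ht1 : -2 ≤ t) (ht2 : t ≤ 1/2) :
    ∫ s in (-2:ℝ)..t, d72 s = x72 t + 1 := by
  rcases le_or_gt t 0 with h | h
  · rw [intervalIntegral.integral_congr (g := phid)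
      (fun s hs => by
        rw [uIcc_of_le ht1] at hs
        rw [d72, if_pos (le_trans hs.2 h)]),
      int_phid ht1 h, x72, if_pos h]
  · rw [← intervalIntegral.integral_add_adjacent_intervals
      (d72_ii (by norm_num) (by norm_num) (by norm_num) : IntervalIntegrable d72 volume (-2) 0)
      (d72_ii (by norm_num) h.le ht2),
      intervalIntegral.integral_congr (g := phid) (a := (-2:ℝ)) (b := (0:ℝ))
      (fun s hs => by
        rw [uIcc_of_le (by norm_num : (-2:ℝ) ≤ 0)] at hs
        rw [d72, if_pos hs.2]),
      int_phid (by norm_num) le_rfl, phi7_zero,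
      intervalIntegral.integral_congr_ae (g := fun s => 1 - 3 * s ^ 2)
      (MeasureTheory.ae_of_all _ (fun s hs => by
        rw [uIoc_of_le h.le] at hs
        rw [d72, if_neg (not_le.2 hs.1)])),
      x72, if_neg (not_le.2 h)]
    rw [intervalIntegral.integral_sub (g := fun s : ℝ => 3 * s ^ 2) intervalIntegrable_const
      (((continuous_const.mul (continuous_pow 2)).intervalIntegrable _ _ :
        IntervalIntegrable (fun s : ℝ => 3 * s ^ 2) volume 0 t)),
      intervalIntegral.integral_const_mul, integral_pow]
    simp
    ring

lemma memH1_x71 : MemH1 (-2) (1/2) x71 d71 := by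
  refine ⟨cont_x71.continuousOn, memL2_of_cont cont_x71 _ _, d71_memL2, ?_⟩
  intro t ht
  rw [int_d71 ht.1 ht.2, show x71 (-2) = -1 by rw [x71, if_pos (by norm_num)]; exact phi7_neg_two]
  ring

lemma memH1_x72 : MemH1 (-2) (1/2) x72 d72 := by
  refine ⟨cont_x72.continuousOn, memL2_of_cont cont_x72 _ _, d72_memL2, ?_⟩
  intro t ht
  rw [int_d72 ht.1 ht.2, show x72 (-2) = -1 by rw [x72, if_pos (by norm_num)]; exact phi7_neg_two]
  ring

lemma eq71 : ∀ t ∈ Set.Ioo (0:ℝ) (1/2), d71 t = -x71 (t - min |x71 t| 2) := by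
  intro t ht
  have h1 : x71 t = 1 + t := by rw [x71, if_neg (not_le.2 ht.1)]
  have h2 : |x71 t| = 1 + t := by rw [h1, abs_of_pos (by linarith [ht.1])]
  have h3 : min |x71 t| 2 = 1 + t := by rw [h2, min_eq_left (by linarith [ht.2])]
  rw [h3, show t - (1 + t) = -1 by ring, d71, if_neg (not_le.2 ht.1), x71,
    if_pos (by norm_num : (-1:ℝ) ≤ 0), phi7_neg_one]
  norm_num

lemma eq72 : ∀ t ∈ Set.Ioo (0:ℝ) (1/2), d72 t = -x72 (t - min |x72 t| 2) := by
  intro t ht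
  obtain ⟨ht0, ht5⟩ := ht
  have hv : x72 t = 1 + t - t ^ 3 := by rw [x72, if_neg (not_le.2 ht0)]
  have htsq : t ^ 2 < 1/4 := by nlinarith
  have ht3pos : 0 < t ^ 3 := pow_pos ht0 3
  have ht3 : t ^ 3 < t/4 := by nlinarith
  have hpos : 0 < 1 + t - t ^ 3 := by linarith
  have hlt2 : 1 + t - t ^ 3 ≤ 2 := by linarith
  have h2 : |x72 t| = 1 + t - t ^ 3 := by rw [hv, abs_of_pos hpos]
  have h3 : min |x72 t| 2 = 1 + t - t ^ 3 := by rw [h2, min_eq_left (by linarith)]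
  have harg : t - (1 + t - t ^ 3) = t ^ 3 - 1 := by ring
  have hcube : t ^ 3 ≤ (Real.sqrt 27)⁻¹ := by
    have h6 : (Real.sqrt 27)⁻¹ ≥ 1/6 := by
      have := s27_mem.2
      have hpos : (0:ℝ) < Real.sqrt 27 := by linarith [s27_mem.1]
      rw [ge_iff_le, le_inv_comm₀ (by norm_num) hpos]
      linarith
    linarith
  have hble : t ^ 3 - 1 ≤ bpt := by
    have := bpt_add_one; linarith
  have hmem : phi7 (t ^ 3 - 1) = 3 * (t ^ 3) ^ ((2:ℝ)/3) - 1 := by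
    rw [phi7_mid (by linarith) hble]
    norm_num
  have hrw : (t ^ 3 : ℝ) ^ ((2:ℝ)/3) = t ^ 2 := by
    rw [← Real.rpow_natCast t 3, ← Real.rpow_mul ht0.le,
      show ((3:ℕ):ℝ) * (2/3) = ((2:ℕ):ℝ) by norm_num, Real.rpow_natCast]
  rw [h3, harg, d72, if_neg (not_le.2 ht0), x72,
    if_pos (by linarith : t ^ 3 - 1 ≤ 0), hmem, hrw]
  ring

lemma not_lip : ¬ ∃ K : ℝ, ∀ s ∈ Set.Icc (-2 : ℝ) 0, ∀ t ∈ Set.Icc (-2 : ℝ) 0,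
    |phi7 s - phi7 t| ≤ K * |s - t| := by
  rintro ⟨K, hK⟩
  set K' : ℝ := max K 1 with hK'
  have hK1 : 1 ≤ K' := le_max_right _ _
  have hK0 : 0 < K' := by linarith
  set ε : ℝ := min ((Real.sqrt 27)⁻¹) ((K'⁻¹) ^ 3) with hε
  have hs27pos : (0:ℝ) < (Real.sqrt 27)⁻¹ := by
    have := s27_mem.1; positivity
  have hεpos : 0 < ε := lt_min hs27pos (by positivity)
  have hε1 : ε ≤ (Real.sqrt 27)⁻¹ := min_le_left _ _
  have hεK : ε ≤ (K'⁻¹) ^ 3 := min_le_right _ _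
  have hεle1 : ε ≤ 1 := by
    have : (Real.sqrt 27)⁻¹ ≤ 1 := by
      have := s27_mem.1
      rw [inv_le_one_iff₀]; right; linarith
    linarith
  have hsmem : (-1 + ε) ∈ Set.Icc (-2:ℝ) 0 := ⟨by linarith, by linarith⟩
  have htmem : (-1 : ℝ) ∈ Set.Icc (-2:ℝ) 0 := ⟨by norm_num, by norm_num⟩
  have hphis : phi7 (-1 + ε) = 3 * ε ^ ((2:ℝ)/3) - 1 := by
    rw [phi7_mid (by linarith) (by rw [← bpt_add_one] at hε1; linarith)]
    norm_num
  have h23pos : 0 < ε ^ ((2:ℝ)/3) := Real.rpow_pos_of_pos hεpos _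
  have hbound := hK (-1 + ε) hsmem (-1) htmem
  rw [hphis, phi7_neg_one, show (3 * ε ^ ((2:ℝ)/3) - 1 - -1) = 3 * ε ^ ((2:ℝ)/3) by ring,
    show (-1 + ε - -1) = ε by ring, abs_of_pos (by positivity), abs_of_pos hεpos] at hbound
  -- Now derive contradiction: K * ε ≤ K' * ε ≤ ε^{2/3} < 3 ε^{2/3}
  have hsplit : ε = ε ^ ((1:ℝ)/3) * ε ^ ((2:ℝ)/3) := by
    rw [← Real.rpow_add hεpos]
    norm_num
  have h13 : ε ^ ((1:ℝ)/3) ≤ K'⁻¹ := by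
    calc ε ^ ((1:ℝ)/3) ≤ ((K'⁻¹) ^ 3) ^ ((1:ℝ)/3) :=
          Real.rpow_le_rpow hεpos.le hεK (by norm_num)
      _ = K'⁻¹ := by
          rw [← Real.rpow_natCast (K'⁻¹) 3, ← Real.rpow_mul (by positivity)]
          norm_num
  have hKK : K * ε ≤ K' * ε := mul_le_mul_of_nonneg_right (le_max_left _ _) hεpos.le
  have hfin : K' * ε ≤ ε ^ ((2:ℝ)/3) := by
    rw [hsplit, ← mul_assoc]
    have : K' * ε ^ ((1:ℝ)/3) ≤ K' * K'⁻¹ := mul_le_mul_of_nonneg_left h13 hK0.le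
    rw [mul_inv_cancel₀ (ne_of_gt hK0)] at this
    nlinarith [Real.rpow_pos_of_pos hεpos ((2:ℝ)/3)]
  nlinarith

lemma x_ne : x71 (1/4 : ℝ) ≠ x72 (1/4 : ℝ) := by
  rw [x71, x72, if_neg (by norm_num), if_neg (by norm_num)]
  norm_num

/-- **Sharpness of the Lipschitz assumption on the pre-history** (Example 4.3).
The pre-history `phi7` belongs to `H¹(-2,0)` but is not Lipschitz continuous, and for
some `T > 0` the two functions `x71`, `x72` (which differ on `(0,T)` and both extend
`phi7`) both solve `x'(t) = -x(t - min {|x(t)|, 2})` on `(0,T)` with pre-history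
`x_{(0)} = phi7`; so uniqueness fails for this `H¹` pre-history. -/
theorem stmt7 :
    (∃ φd : ℝ → ℝ, MemH1 (-2) 0 phi7 φd) ∧
    (¬ ∃ K : ℝ, ∀ s ∈ Set.Icc (-2 : ℝ) 0, ∀ t ∈ Set.Icc (-2 : ℝ) 0,
      |phi7 s - phi7 t| ≤ K * |s - t|) ∧
    (∃ T : ℝ, 0 < T ∧
      (∃ d₁ : ℝ → ℝ, MemH1 (-2) T x71 d₁ ∧
        ∀ t ∈ Set.Ioo (0 : ℝ) T, d₁ t = -x71 (t - min |x71 t| 2)) ∧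
      (∃ d₂ : ℝ → ℝ, MemH1 (-2) T x72 d₂ ∧
        ∀ t ∈ Set.Ioo (0 : ℝ) T, d₂ t = -x72 (t - min |x72 t| 2)) ∧
      ∃ t ∈ Set.Ioo (0 : ℝ) T, x71 t ≠ x72 t) := by
  refine ⟨⟨phid, memH1_phi7⟩, not_lip, ⟨1/2, by norm_num,
    ⟨d71, memH1_x71, eq71⟩, ⟨d72, memH1_x72, eq72⟩,
    ⟨1/4, ⟨by norm_num, by norm_num⟩, x_ne⟩⟩⟩
end

section
/- Let h, T > 0, n ∈ ℕ, let g : [0,T]×ℝ^n×ℝ^n → ℝ^n satisfy (H1) with Lipschitz constant L, and let r : H¹(−h,0;ℝ^n) → [−h,0] satisfy (H2). Let φ ∈ H¹(−h,0;ℝ^n) have essentially bounded weak derivative and let x ∈ H¹(−h,T;ℝ^n) solve x′(t) = g(t, x(t), x(t + r(x_{(t)}))) on (0,T) with x_{(0)} = φ. Then for all t ∈ [0,T]: ‖x(t)‖ ≤ (‖φ‖_∞ + ∫₀^t ‖g(s,0,0)‖ ds) e^{2Lt}. -/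
open MeasureTheory Set Filter

section SDD

variable {E : Type*} [NormedAddCommGroup E] [NormedSpace ℝ E]

/-- `x` (with weak derivative `xd`) solves the state-dependent delay equation
`x'(t) = g (t, x(t), x(t + r(x_{(t)})))` on `(0,T)` with pre-history `φ`,
as an element of `H¹(-h,T;E)`. -/
def SolSDD (h T : ℝ) (g : ℝ → E → E → E) (r : (ℝ → E) → ℝ) (φ : ℝ → E)
    (x xd : ℝ → E) : Prop :=
  MemH1 (-h) T x xd ∧
    (∀ t ∈ Set.Ioo 0 T, xd t = g t (x t) (x (t + r (prehist x t)))) ∧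
    (∀ s ∈ Set.Icc (-h) 0, x s = φ s)

end SDD

open intervalIntegral in

lemma gronwall_aux (T L M : ℝ) (hL : 0 ≤ L) (hM : 0 ≤ M)
    (w β : ℝ → ℝ) (hw : Integrable w) (hw0 : ∀ s, 0 ≤ w s)
    (hβ : Continuous β) (hβ0 : ∀ s, 0 ≤ β s)
    (hbound : ∀ s ∈ Set.Ioo (0:ℝ) T, w s ≤ β s + 2*L*(M + ∫ u in (0:ℝ)..s, w u)) :
    ∀ t ∈ Set.Icc (0:ℝ) T,
      M + ∫ s in (0:ℝ)..t, w s ≤ (M + ∫ s in (0:ℝ)..t, β s) * Real.exp (2*L*t) := by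
  set Y : ℝ → ℝ := fun t => M + ∫ s in (0:ℝ)..t, w s with hYdef
  set B : ℝ → ℝ := fun t => ∫ s in (0:ℝ)..t, β s with hBdef
  have hYcont : Continuous Y := continuous_const.add (hw.continuous_primitive 0)
  have hBcont : Continuous B := continuous_primitive (fun a b => hβ.intervalIntegrable a b) 0
  have hYmono : ∀ a b : ℝ, a ≤ b → Y a ≤ Y b := by
    intro a b hab
    have h1 : Y b - Y a = ∫ s in a..b, w s := by
      simp only [hYdef, add_sub_add_left_eq_sub]
      rw [integral_interval_sub_left hw.intervalIntegrable hw.intervalIntegrable]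
    nlinarith [intervalIntegral.integral_nonneg (μ := volume) (f := w) hab (fun u _ => hw0 u)]
  have hB0 : ∀ t, 0 ≤ t → 0 ≤ B t := fun t ht =>
    intervalIntegral.integral_nonneg ht (fun u _ => hβ0 u)
  have hBderiv : ∀ t : ℝ, HasDerivAt B (β t) t := fun t =>
    intervalIntegral.integral_hasDerivAt_right (hβ.intervalIntegrable _ _)
      hβ.aestronglyMeasurable.stronglyMeasurableAtFilter hβ.continuousAt
  -- main epsilon claim
  have key : ∀ ε : ℝ, 0 < ε → ∀ t ∈ Set.Icc (0:ℝ) T,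
      Y t ≤ (M + ε + B t) * Real.exp (2*L*t) := by
    intro ε hε
    set Z : ℝ → ℝ := fun t => (M + ε + B t) * Real.exp (2*L*t) with hZdef
    have hZcont : Continuous Z :=
      ((continuous_const.add hBcont).mul (Real.continuous_exp.comp (continuous_const.mul continuous_id)))
    have hZderiv : ∀ t : ℝ, HasDerivAt Z
        (β t * Real.exp (2*L*t) + (M + ε + B t) * (2*L*Real.exp (2*L*t))) t := by
      intro t
      have h1 : HasDerivAt (fun t => M + ε + B t) (β t) t := ((hBderiv t).const_add _)
      have h2 : HasDerivAt (fun t : ℝ => Real.exp (2*L*t)) (2*L*Real.exp (2*L*t)) t := by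
        have := ((hasDerivAt_id t).const_mul (2*L)).exp
        simpa [mul_comm] using this
      exact h1.mul h2
    by_contra hcon
    push_neg at hcon
    obtain ⟨t₁, ht₁, hlt⟩ := hcon
    set S : Set ℝ := Set.Icc 0 T ∩ {t | Z t ≤ Y t} with hSdef
    have hSne : S.Nonempty := ⟨t₁, ht₁, hlt.le⟩
    have hSclosed : IsClosed S := isClosed_Icc.inter (isClosed_le hZcont hYcont)
    have hSbdd : BddBelow S := ⟨0, fun t ht => ht.1.1⟩
    set t₀ : ℝ := sInf S with ht₀def
    have ht₀S : t₀ ∈ S := hSclosed.csInf_mem hSne hSbdd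
    have ht₀0 : 0 ≤ t₀ := ht₀S.1.1
    have ht₀T : t₀ ≤ T := ht₀S.1.2
    have hY0 : Y 0 = M := by simp [hYdef]
    have hZ0 : Z 0 = M + ε := by simp [hZdef, hBdef]
    have ht₀pos : 0 < t₀ := by
      rcases ht₀0.lt_or_eq with h | h
      · exact h
      · exfalso
        have := ht₀S.2
        rw [← h] at this
        simp only [Set.mem_setOf_eq] at this
        rw [hY0, hZ0] at this
        linarith
    have hbefore : ∀ s : ℝ, 0 ≤ s → s < t₀ → Y s ≤ Z s := by
      intro s hs0 hst
      by_contra hc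
      push_neg at hc
      have hsS : s ∈ S := ⟨⟨hs0, hst.le.trans ht₀T⟩, hc.le⟩
      exact absurd (csInf_le hSbdd hsS) (not_le.mpr hst)
    -- integral comparison
    have hibound : ∀ᵐ s ∂(volume.restrict (Set.Icc 0 t₀)),
        w s ≤ β s + 2*L*Z s := by
      rw [ae_restrict_iff' measurableSet_Icc]
      have h1 : ∀ᵐ s : ℝ ∂volume, s ≠ 0 ∧ s ≠ t₀ := by
        have h0 : ∀ᵐ s : ℝ ∂volume, s ≠ 0 := by
          rw [ae_iff]; simpa using measure_singleton (0:ℝ)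
        have ht : ∀ᵐ s : ℝ ∂volume, s ≠ t₀ := by
          rw [ae_iff]; simpa using measure_singleton t₀
        exact h0.and ht
      filter_upwards [h1] with s hs hsIcc
      have hs1 : s ∈ Set.Ioo (0:ℝ) t₀ :=
        ⟨hsIcc.1.lt_of_ne' (Ne.symm hs.1).symm, hsIcc.2.lt_of_ne hs.2⟩
      have hsT : s ∈ Set.Ioo (0:ℝ) T := ⟨hs1.1, hs1.2.trans_le ht₀T⟩
      have := hbound s hsT
      have hYZ : Y s ≤ Z s := hbefore s hs1.1.le hs1.2
      have : w s ≤ β s + 2*L*Y s := this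
      nlinarith
    have hZint : IntervalIntegrable (fun s => β s + 2*L*Z s) volume 0 t₀ :=
      ((hβ.add (continuous_const.mul hZcont)).intervalIntegrable _ _)
    have hI1 : ∫ s in (0:ℝ)..t₀, w s ≤ ∫ s in (0:ℝ)..t₀, (β s + 2*L*Z s) :=
      intervalIntegral.integral_mono_ae_restrict ht₀0 hw.intervalIntegrable hZint hibound
    -- FTC for Z
    have hZ'cont : Continuous (fun t => β t * Real.exp (2*L*t) + (M + ε + B t) * (2*L*Real.exp (2*L*t))) := by
      have hec : Continuous (fun t : ℝ => Real.exp (2*L*t)) :=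
        Real.continuous_exp.comp (continuous_const.mul continuous_id)
      exact (hβ.mul hec).add ((continuous_const.add hBcont).mul (continuous_const.mul hec))
    have hftc : ∫ s in (0:ℝ)..t₀, (β s * Real.exp (2*L*s) + (M + ε + B s) * (2*L*Real.exp (2*L*s)))
        = Z t₀ - Z 0 :=
      intervalIntegral.integral_eq_sub_of_hasDerivAt (fun s _ => hZderiv s)
        (hZ'cont.intervalIntegrable _ _)
    have hI2 : ∫ s in (0:ℝ)..t₀, (β s + 2*L*Z s)
        ≤ ∫ s in (0:ℝ)..t₀, (β s * Real.exp (2*L*s) + (M + ε + B s) * (2*L*Real.exp (2*L*s))) := by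
      apply intervalIntegral.integral_mono_on ht₀0 hZint (hZ'cont.intervalIntegrable _ _)
      intro s hs
      have hexp : 1 ≤ Real.exp (2*L*s) := by
        rw [show (1:ℝ) = Real.exp 0 by simp]
        exact Real.exp_le_exp.mpr (by nlinarith [hs.1])
      have hAs : 0 ≤ M + ε + B s := by
        have := hB0 s hs.1
        linarith
      have h1 : β s ≤ β s * Real.exp (2*L*s) := le_mul_of_one_le_right (hβ0 s) hexp
      have h2 : 2*L*Z s = (M + ε + B s) * (2*L*Real.exp (2*L*s)) := by
        simp only [hZdef]; ring
      linarith
    have hfinal : Y t₀ ≤ Z t₀ - ε := by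
      have : Y t₀ = M + ∫ s in (0:ℝ)..t₀, w s := rfl
      rw [this]
      have := hI1.trans hI2
      rw [hftc, hZ0] at this
      linarith
    have := ht₀S.2
    simp only [Set.mem_setOf_eq] at this
    linarith
  -- take ε → 0
  intro t ht
  have hexp : 0 < Real.exp (2*L*t) := Real.exp_pos _
  refine le_of_forall_pos_le_add ?_
  intro ε hε
  have h1 := key (ε / Real.exp (2*L*t)) (by positivity) t ht
  calc Y t ≤ (M + ε / Real.exp (2*L*t) + B t) * Real.exp (2*L*t) := h1
    _ = (M + B t) * Real.exp (2*L*t) + ε := by field_simp; ring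


/-- **A priori exponential bound for solutions** (Lemma 4.6). If `x ∈ H¹(-h,T;ℝⁿ)` solves
the state-dependent delay equation with pre-history `φ` (with bounded weak derivative),
then `‖x(t)‖ ≤ (‖φ‖_∞ + ∫₀ᵗ ‖g(s,0,0)‖ ds) e^{2Lt}` for all `t ∈ [0,T]`. -/
theorem stmt9 (h T : ℝ) (hh : 0 < h) (hT : 0 < T) (n : ℕ)
    (g : ℝ → EuclideanSpace ℝ (Fin n) → EuclideanSpace ℝ (Fin n) → EuclideanSpace ℝ (Fin n))
    (hg_cont : ContinuousOn
      (fun p : ℝ × EuclideanSpace ℝ (Fin n) × EuclideanSpace ℝ (Fin n) => g p.1 p.2.1 p.2.2)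
      (Set.Icc 0 T ×ˢ (Set.univ : Set (EuclideanSpace ℝ (Fin n) × EuclideanSpace ℝ (Fin n)))))
    (L : ℝ) (hL : 0 ≤ L)
    (hg_lip : ∀ t ∈ Set.Icc (0 : ℝ) T, ∀ x y u v,
      ‖g t x u - g t y v‖ ≤ L * (‖x - y‖ + ‖u - v‖))
    (r : (ℝ → EuclideanSpace ℝ (Fin n)) → ℝ)
    (hr_range : ∀ ψ, r ψ ∈ Set.Icc (-h) 0)
    (Lr : ℝ)
    (hr_lip : ∀ φ φd ψ ψd, MemH1 (-h) 0 φ φd → MemH1 (-h) 0 ψ ψd →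
      |r φ - r ψ| ≤ Lr * H1norm (-h) 0 (φ - ψ) (φd - ψd))
    (φ φd : ℝ → EuclideanSpace ℝ (Fin n)) (hφ : MemH1 (-h) 0 φ φd)
    (M : ℝ) (hφbd : ∀ᵐ t ∂(volume.restrict (Set.Ioo (-h) (0 : ℝ))), ‖φd t‖ ≤ M)
    (x xd : ℝ → EuclideanSpace ℝ (Fin n)) (hx : SolSDD h T g r φ x xd) :
    ∀ t ∈ Set.Icc (0 : ℝ) T,
      ‖x t‖ ≤ ((⨆ s : Set.Icc (-h) (0 : ℝ), ‖φ (s : ℝ)‖) + ∫ s in (0 : ℝ)..t, ‖g s 0 0‖) *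
        Real.exp (2 * L * t) := by
  classical
  obtain ⟨hxH1, hxeq, hxφ⟩ := hx
  have hhT : -h ≤ T := by linarith
  have hh0 : -h ≤ (0:ℝ) := by linarith
  -- sup norm of φ
  set Mφ : ℝ := ⨆ s : Set.Icc (-h) (0 : ℝ), ‖φ (s : ℝ)‖ with hMφdef
  have hbddφ : BddAbove (Set.range fun s : Set.Icc (-h) (0:ℝ) => ‖φ (s : ℝ)‖) := by
    have h1 : (Set.range fun s : Set.Icc (-h) (0:ℝ) => ‖φ (s : ℝ)‖)
        = (fun t => ‖φ t‖) '' Set.Icc (-h) 0 := (Set.image_eq_range (fun t : ℝ => ‖φ t‖) (Set.Icc (-h) (0:ℝ))).symm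
    rw [h1]
    exact (isCompact_Icc.image_of_continuousOn hφ.contOn.norm).bddAbove
  have hMle : ∀ s ∈ Set.Icc (-h) (0:ℝ), ‖φ s‖ ≤ Mφ := fun s hs =>
    le_ciSup hbddφ (⟨s, hs⟩ : Set.Icc (-h) (0:ℝ))
  have hM0 : 0 ≤ Mφ := (norm_nonneg (φ 0)).trans (hMle 0 ⟨hh0, le_refl 0⟩)
  -- clamped beta
  set c : ℝ → ℝ := fun s => max 0 (min s T) with hcdef
  have hcmem : ∀ s, c s ∈ Set.Icc (0:ℝ) T :=
    fun s => ⟨le_max_left _ _, max_le hT.le (min_le_right _ _)⟩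
  have hceq : ∀ s ∈ Set.Icc (0:ℝ) T, c s = s := by
    intro s hs
    simp [hcdef, min_eq_left hs.2, max_eq_right hs.1]
  set β : ℝ → ℝ := fun s => ‖g (c s) 0 0‖ with hβdef
  have hβcont : Continuous β := by
    have hc : Continuous c := continuous_const.max (continuous_id.min continuous_const)
    have hmap : Continuous (fun s : ℝ =>
        ((c s, (0, 0)) : ℝ × EuclideanSpace ℝ (Fin n) × EuclideanSpace ℝ (Fin n))) :=
      hc.prodMk continuous_const
    exact (hg_cont.comp_continuous hmap (fun s => ⟨hcmem s, Set.mem_univ _⟩)).norm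
  have hβ0 : ∀ s, 0 ≤ β s := fun s => norm_nonneg _
  -- integrability of xd
  haveI hfin : IsFiniteMeasure (volume.restrict (Set.Ioo (-h) T)) := by
    constructor
    rw [Measure.restrict_apply_univ]
    simp [Real.volume_Ioo]
  have hxdIoo : IntegrableOn xd (Set.Ioo (-h) T) := hxH1.derivMemL2.integrable one_le_two
  have hxdIcc : IntegrableOn xd (Set.Icc (-h) T) := by
    rwa [IntegrableOn, ← Measure.restrict_congr_set Ioo_ae_eq_Icc]
  have hxdint : ∀ a b : ℝ, a ∈ Set.Icc (-h) T → b ∈ Set.Icc (-h) T →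
      IntervalIntegrable xd volume a b := by
    intro a b ha hb
    exact (hxdIcc.mono_set (Set.uIcc_subset_Icc ha hb)).intervalIntegrable
  -- FTC for x on [0,T]
  have hx0 : ∀ t ∈ Set.Icc (0:ℝ) T, x t - x 0 = ∫ s in (0:ℝ)..t, xd s := by
    intro t ht
    have h1 := hxH1.ftc t ⟨hh0.trans ht.1, ht.2⟩
    have h2 := hxH1.ftc 0 ⟨hh0, hT.le⟩
    rw [h1, h2]
    rw [add_sub_add_left_eq_sub,
      intervalIntegral.integral_interval_sub_left
        (hxdint _ _ ⟨le_refl _, hhT⟩ ⟨hh0.trans ht.1, ht.2⟩)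
        (hxdint _ _ ⟨le_refl _, hhT⟩ ⟨hh0, hT.le⟩)]
  -- the weight function
  set w : ℝ → ℝ := (Set.Ioo (-h) T).indicator (fun s => ‖xd s‖) with hwdef
  have hw0 : ∀ s, 0 ≤ w s := fun s => Set.indicator_nonneg (fun u _ => norm_nonneg _) s
  have hwint : Integrable w := MeasureTheory.IntegrableOn.integrable_indicator hxdIoo.norm measurableSet_Ioo
  set Y : ℝ → ℝ := fun t => Mφ + ∫ s in (0:ℝ)..t, w s with hYdef
  have hY0 : ∀ t, 0 ≤ t → Mφ ≤ Y t := by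
    intro t htt
    have : 0 ≤ ∫ s in (0:ℝ)..t, w s :=
      intervalIntegral.integral_nonneg (μ := volume) htt (fun u _ => hw0 u)
    simp only [hYdef]; linarith
  have hYmono : ∀ a b : ℝ, a ≤ b → Y a ≤ Y b := by
    intro a b hab
    have h1 : Y b - Y a = ∫ s in a..b, w s := by
      simp only [hYdef, add_sub_add_left_eq_sub]
      rw [intervalIntegral.integral_interval_sub_left hwint.intervalIntegrable
        hwint.intervalIntegrable]
    nlinarith [intervalIntegral.integral_nonneg (μ := volume) (f := w) hab (fun u _ => hw0 u)]
  -- ‖x t‖ ≤ Y t on [0,T]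
  have hxY : ∀ t ∈ Set.Icc (0:ℝ) T, ‖x t‖ ≤ Y t := by
    intro t ht
    have hx0' := hx0 t ht
    have hnorm : ‖∫ s in (0:ℝ)..t, xd s‖ ≤ |∫ s in (0:ℝ)..t, w s| := by
      apply intervalIntegral.norm_integral_le_abs_of_norm_le _ hwint.intervalIntegrable
      have hT' : ∀ᵐ s : ℝ ∂volume, s ≠ T := by
        rw [ae_iff]; simpa using measure_singleton T
      rw [Set.uIoc_of_le ht.1]
      filter_upwards [ae_restrict_mem measurableSet_Ioc,
        hT'.filter_mono (ae_mono Measure.restrict_le_self)] with s hs hsT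
      have : s ∈ Set.Ioo (-h) T := ⟨by linarith [hs.1], lt_of_le_of_ne (hs.2.trans ht.2) hsT⟩
      rw [hwdef, Set.indicator_of_mem this]
    have habs : |∫ s in (0:ℝ)..t, w s| = ∫ s in (0:ℝ)..t, w s :=
      abs_of_nonneg (intervalIntegral.integral_nonneg (μ := volume) ht.1 (fun u _ => hw0 u))
    have hxφ0 : ‖x 0‖ ≤ Mφ := by
      rw [hxφ 0 ⟨hh0, le_refl 0⟩]
      exact hMle 0 ⟨hh0, le_refl 0⟩
    calc ‖x t‖ ≤ ‖x 0‖ + ‖x t - x 0‖ := by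
          have := norm_add_le (x 0) (x t - x 0); simpa using this
      _ ≤ Mφ + ∫ s in (0:ℝ)..t, w s := by
          rw [hx0'] at *
          exact add_le_add hxφ0 (hnorm.trans habs.le)
  -- the pointwise differential bound
  have hbound : ∀ s ∈ Set.Ioo (0:ℝ) T, w s ≤ β s + 2*L*(Mφ + ∫ u in (0:ℝ)..s, w u) := by
    intro s hs
    have hsIoo : s ∈ Set.Ioo (-h) T := ⟨by linarith [hs.1], hs.2⟩
    have hws : w s = ‖xd s‖ := Set.indicator_of_mem hsIoo _
    have heq := hxeq s hs
    set τ : ℝ := s + r (prehist x s) with hτdef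
    have hr := hr_range (prehist x s)
    have hτmem : τ ∈ Set.Icc (-h) s := ⟨by linarith [hr.1, hs.1.le], by linarith [hr.2]⟩
    have hxτ : ‖x τ‖ ≤ Y s := by
      rcases le_or_gt τ 0 with hτ0 | hτ0
      · have : x τ = φ τ := hxφ τ ⟨hτmem.1, hτ0⟩
        rw [this]
        exact (hMle τ ⟨hτmem.1, hτ0⟩).trans (hY0 s hs.1.le)
      · have : ‖x τ‖ ≤ Y τ := hxY τ ⟨hτ0.le, hτmem.2.trans hs.2.le⟩
        exact this.trans (hYmono τ s hτmem.2)
    have hxs : ‖x s‖ ≤ Y s := hxY s ⟨hs.1.le, hs.2.le⟩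
    have hg1 : ‖g s (x s) (x τ)‖ ≤ ‖g s 0 0‖ + L * (‖x s‖ + ‖x τ‖) := by
      have h1 : ‖g s (x s) (x τ) - g s 0 0‖ ≤ L * (‖x s - 0‖ + ‖x τ - 0‖) :=
        hg_lip s ⟨hs.1.le, hs.2.le⟩ (x s) 0 (x τ) 0
      simp only [sub_zero] at h1
      calc ‖g s (x s) (x τ)‖ ≤ ‖g s (x s) (x τ) - g s 0 0‖ + ‖g s 0 0‖ := by
            have := norm_sub_norm_le (g s (x s) (x τ)) (g s 0 0); linarith [norm_add_le (g s (x s) (x τ) - g s 0 0) (g s 0 0), (by abel : g s (x s) (x τ) - g s 0 0 + g s 0 0 = g s (x s) (x τ))]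
        _ ≤ ‖g s 0 0‖ + L * (‖x s‖ + ‖x τ‖) := by linarith
    have hβs : β s = ‖g s 0 0‖ := by rw [hβdef]; simp only []; rw [hceq s ⟨hs.1.le, hs.2.le⟩]
    rw [hws, heq, hβs]
    have hYs : Mφ + ∫ u in (0:ℝ)..s, w u = Y s := rfl
    rw [hYs]
    nlinarith [mul_nonneg hL (norm_nonneg (x s)), mul_nonneg hL (norm_nonneg (x τ))]
  -- apply Gronwall
  intro t ht
  have hkey := gronwall_aux T L Mφ hL hM0 w β hwint hw0 hβcont hβ0 hbound t ht
  have hβeq : ∫ s in (0:ℝ)..t, β s = ∫ s in (0:ℝ)..t, ‖g s 0 0‖ := by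
    apply intervalIntegral.integral_congr
    intro s hs
    rw [Set.uIcc_of_le ht.1] at hs
    rw [hβdef]
    simp only []
    rw [hceq s ⟨hs.1, hs.2.trans ht.2⟩]
  have h2L : (2:ℝ)*L*t = 2*L*t := rfl
  calc ‖x t‖ ≤ Y t := hxY t ht
    _ ≤ (Mφ + ∫ s in (0:ℝ)..t, β s) * Real.exp (2*L*t) := hkey
    _ = (Mφ + ∫ s in (0:ℝ)..t, ‖g s 0 0‖) * Real.exp (2*L*t) := by rw [hβeq]
end

section
/- (Permanence principle.) Let h, T > 0, n ∈ ℕ, let g satisfy (H1), r satisfy (H2), let φ ∈ H¹(−h,0;ℝ^n) have essentially bounded weak derivative, and let x ∈ H¹(−h,T;ℝ^n) solve x′(t) = g(t, x(t), x(t + r(x_{(t)}))) on (0,T) with x_{(0)} = φ. Then for every ε > 0 there exists T_ε ∈ (0,T] such that for all t with 0 < t ≤ T_ε: sup_{s∈[−h,0]} ‖x(s+t) − φ(s)‖ + ‖x′(t) − g(0, φ(0), φ(r(φ)))‖ ≤ ε. -/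
open MeasureTheory Set Filter
open scoped ENNReal Topology

/-- Continuity of translation in `L²(ℝ)`, integral form. -/
theorem aux_shift_L2 {E : Type*} [NormedAddCommGroup E] (ψ : ℝ → E)
    (hψ : MemLp ψ 2 volume) {ε : ℝ} (hε : 0 < ε) :
    ∃ δ > 0, ∀ t : ℝ, |t| < δ → (∫ s, ‖ψ (s + t) - ψ s‖ ^ 2) ≤ ε := by
  haveI : Fact ((1:ℝ≥0∞) ≤ 2) := ⟨one_le_two⟩
  set τ : ℝ → C(ℝ, ℝ) := fun t => ⟨fun s => s + t, by fun_prop⟩ with hτdef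
  have hτc : Continuous τ := by
    apply ContinuousMap.continuous_of_continuous_uncurry
    exact continuous_snd.add continuous_fst
  have hτm : ∀ t : ℝ, MeasurePreserving (τ t) volume volume := fun t =>
    measurePreserving_add_right volume t
  set F : ℝ → Lp E 2 volume := fun t =>
    Lp.compMeasurePreserving (τ t) (hτm t) (hψ.toLp ψ) with hF
  have hFc : Continuous F :=
    Continuous.compMeasurePreservingLp continuous_const hτc hτm (by norm_num)
  have hcoe : ∀ t : ℝ, ⇑(F t) =ᵐ[volume] fun s => ψ (s + t) := by
    intro t
    have h1 := Lp.coeFn_compMeasurePreserving (hψ.toLp ψ) (hτm t)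
    have h2 : (⇑(hψ.toLp ψ)) ∘ (τ t) =ᵐ[volume] ψ ∘ (τ t) :=
      (hτm t).quasiMeasurePreserving.ae_eq_comp (hψ.coeFn_toLp)
    exact h1.trans h2
  have hkey : ∀ t : ℝ, (∫ s, ‖ψ (s + t) - ψ s‖ ^ 2) = dist (F t) (F 0) ^ 2 := by
    intro t
    have hut : MemLp (fun s => ψ (s + t)) 2 volume :=
      hψ.comp_measurePreserving (hτm t)
    have hmem : MemLp (fun s => ψ (s + t) - ψ s) 2 volume := hut.sub hψ
    have hae : (⇑(F t) - ⇑(F 0)) =ᵐ[volume] fun s => ψ (s + t) - ψ s := by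
      filter_upwards [hcoe t, hcoe 0] with s h1 h0
      simp only [Pi.sub_apply, h1, h0, add_zero]
    have hnn : (0:ℝ) ≤ ∫ s, ‖ψ (s + t) - ψ s‖ ^ (2:ℝ) :=
      integral_nonneg fun s => by positivity
    have hd : dist (F t) (F 0) = (∫ s, ‖ψ (s + t) - ψ s‖ ^ (2:ℝ)) ^ ((2:ℝ)⁻¹) := by
      rw [Lp.dist_def, eLpNorm_congr_ae hae,
        hmem.eLpNorm_eq_integral_rpow_norm two_ne_zero ENNReal.ofNat_ne_top]
      simp only [ENNReal.toReal_ofNat]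
      rw [ENNReal.toReal_ofReal (Real.rpow_nonneg hnn _)]
    have hpow : (∫ s, ‖ψ (s + t) - ψ s‖ ^ (2:ℝ)) = ∫ s, ‖ψ (s + t) - ψ s‖ ^ (2:ℕ) := by
      apply integral_congr_ae
      filter_upwards with s
      rw [show ((2:ℝ)) = ((2:ℕ):ℝ) by norm_num, Real.rpow_natCast]
    rw [hd, ← Real.rpow_natCast _ 2, ← Real.rpow_mul hnn]
    norm_num [hpow]
  have hc0 : ContinuousAt F 0 := hFc.continuousAt
  rw [Metric.continuousAt_iff] at hc0
  obtain ⟨δ, hδ, hball⟩ := hc0 (Real.sqrt ε) (Real.sqrt_pos.2 hε)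
  refine ⟨δ, hδ, fun t ht => ?_⟩
  have hdist : dist (F t) (F 0) < Real.sqrt ε := by
    apply hball
    rwa [Real.dist_eq, sub_zero]
  rw [hkey t]
  calc dist (F t) (F 0) ^ 2 ≤ Real.sqrt ε ^ 2 := by
        apply pow_le_pow_left₀ dist_nonneg hdist.le
    _ = ε := Real.sq_sqrt hε.le

/-- **Permanence principle** (Theorem 4.13). If `x ∈ H¹(-h,T;ℝⁿ)` solves the
state-dependent delay equation with Lipschitz pre-history `φ`, then for every `ε > 0`
there is `T_ε ∈ (0,T]` such that for all `0 < t ≤ T_ε`,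
`sup_{s ∈ [-h,0]} ‖x(s+t) - φ(s)‖ + ‖x'(t) - g(0, φ(0), φ(r(φ)))‖ ≤ ε`. -/
theorem stmt15 (h T : ℝ) (hh : 0 < h) (hT : 0 < T) (n : ℕ)
    (g : ℝ → EuclideanSpace ℝ (Fin n) → EuclideanSpace ℝ (Fin n) → EuclideanSpace ℝ (Fin n))
    (hg_cont : ContinuousOn
      (fun p : ℝ × EuclideanSpace ℝ (Fin n) × EuclideanSpace ℝ (Fin n) => g p.1 p.2.1 p.2.2)
      (Set.Icc 0 T ×ˢ (Set.univ : Set (EuclideanSpace ℝ (Fin n) × EuclideanSpace ℝ (Fin n)))))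
    (L : ℝ) (hL : 0 ≤ L)
    (hg_lip : ∀ t ∈ Set.Icc (0 : ℝ) T, ∀ x y u v,
      ‖g t x u - g t y v‖ ≤ L * (‖x - y‖ + ‖u - v‖))
    (r : (ℝ → EuclideanSpace ℝ (Fin n)) → ℝ)
    (hr_range : ∀ ψ, r ψ ∈ Set.Icc (-h) 0)
    (Lr : ℝ)
    (hr_lip : ∀ φ φd ψ ψd, MemH1 (-h) 0 φ φd → MemH1 (-h) 0 ψ ψd →
      |r φ - r ψ| ≤ Lr * H1norm (-h) 0 (φ - ψ) (φd - ψd))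
    (φ φd : ℝ → EuclideanSpace ℝ (Fin n)) (hφ : MemH1 (-h) 0 φ φd)
    (M : ℝ) (hφbd : ∀ᵐ t ∂(volume.restrict (Set.Ioo (-h) (0 : ℝ))), ‖φd t‖ ≤ M)
    (x xd : ℝ → EuclideanSpace ℝ (Fin n)) (hx : SolSDD h T g r φ x xd) :
    ∀ ε > (0 : ℝ), ∃ Tε : ℝ, 0 < Tε ∧ Tε ≤ T ∧
      ∀ t, 0 < t → t ≤ Tε →
        (⨆ s : Set.Icc (-h) (0 : ℝ), ‖x ((s : ℝ) + t) - φ (s : ℝ)‖) +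
            ‖xd t - g 0 (φ 0) (φ (r φ))‖ ≤ ε := by
  obtain ⟨hxH1, hxeq, hxinit⟩ := hx
  intro ε hε
  have hcx : ContinuousOn x (Icc (-h) T) := hxH1.contOn
  -- uniform continuity of x on [-h, T]
  have hUC : ∀ η > (0:ℝ), ∃ δ > (0:ℝ), ∀ u ∈ Icc (-h) T, ∀ v ∈ Icc (-h) T,
      |u - v| < δ → ‖x u - x v‖ < η := by
    intro η hη
    have h1 := isCompact_Icc.uniformContinuousOn_of_continuous hcx
    rw [Metric.uniformContinuousOn_iff] at h1
    obtain ⟨δ, hδ, H⟩ := h1 η hη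
    refine ⟨δ, hδ, fun u hu v hv huv => ?_⟩
    have := H u hu v hv (by rwa [Real.dist_eq])
    rwa [dist_eq_norm] at this
  -- the extended weak derivative
  set ψ : ℝ → EuclideanSpace ℝ (Fin n) := (Ioo (-h) T).indicator xd with hψdef
  have hψ : MemLp ψ 2 volume :=
    (memLp_indicator_iff_restrict measurableSet_Ioo).2 hxH1.derivMemL2
  have hψeq : ∀ s ∈ Ioo (-h) T, ψ s = xd s := fun s hs => indicator_of_mem hs xd
  haveI hfin : IsFiniteMeasure (volume.restrict (Ioo (-h) T)) :=
    ⟨by rw [Measure.restrict_apply_univ]; exact measure_Ioo_lt_top⟩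
  haveI hfin0 : IsFiniteMeasure (volume.restrict (Ioo (-h) (0:ℝ))) :=
    ⟨by rw [Measure.restrict_apply_univ]; exact measure_Ioo_lt_top⟩
  have hxdInt : IntegrableOn xd (Ioo (-h) T) volume := hxH1.derivMemL2.integrable one_le_two
  have hII : ∀ a b : ℝ, a ∈ Ico (-h) T → b ∈ Ico (-h) T → IntervalIntegrable xd volume a b :=
    fun a b ha hb =>
      ⟨hxdInt.mono_set (fun s hs => ⟨ha.1.trans_lt hs.1, hs.2.trans_lt hb.2⟩),
       hxdInt.mono_set (fun s hs => ⟨hb.1.trans_lt hs.1, hs.2.trans_lt ha.2⟩)⟩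
  -- φ with weak derivative xd
  have hφx : MemH1 (-h) 0 φ xd :=
    { contOn := hφ.contOn
      memL2 := hφ.memL2
      derivMemL2 := hxH1.derivMemL2.mono_measure
        (Measure.restrict_mono (Ioo_subset_Ioo le_rfl hT.le) le_rfl)
      ftc := by
        intro u hu
        rw [← hxinit u hu, ← hxinit (-h) (left_mem_Icc.2 (by linarith))]
        exact hxH1.ftc u ⟨hu.1, hu.2.trans hT.le⟩ }
  obtain ⟨K, hK⟩ := isCompact_Icc.exists_bound_of_continuousOn hcx
  -- choose the constants
  obtain ⟨δ₁, hδ₁, hUC₁⟩ := hUC (ε/2) (half_pos hε)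
  have hp0mem : ((0:ℝ), (φ 0, φ (r φ))) ∈ Icc (0:ℝ) T ×ˢ
      (univ : Set (EuclideanSpace ℝ (Fin n) × EuclideanSpace ℝ (Fin n))) :=
    ⟨⟨le_refl _, hT.le⟩, trivial⟩
  have hgc := hg_cont _ hp0mem
  rw [Metric.continuousWithinAt_iff] at hgc
  obtain ⟨δg, hδg, hg2⟩ := hgc (ε/2) (half_pos hε)
  obtain ⟨δ₂, hδ₂, hUC₂⟩ := hUC δg hδg
  set Lr' : ℝ := max Lr 0 + 1 with hLr'
  have hLr'pos : 0 < Lr' := by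
    have : (0:ℝ) ≤ max Lr 0 := le_max_right _ _
    linarith
  set ρ : ℝ := δ₂ / (4 * Lr') with hρdef
  have hρ : 0 < ρ := by positivity
  set ω : ℝ := Real.sqrt (ρ^2 / (2*h)) with hω
  have hωpos : 0 < ω := Real.sqrt_pos.2 (by positivity)
  obtain ⟨δ₄, hδ₄, hUC₄⟩ := hUC ω hωpos
  obtain ⟨δ₅, hδ₅, hshift⟩ := aux_shift_L2 ψ hψ (ε := ρ^2/2) (by positivity)
  set D : ℝ := min δ₁ (min δ₂ (min δ₄ (min δ₅ (min δg T)))) with hD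
  have hDpos : 0 < D := by
    simp only [hD, lt_min_iff]
    exact ⟨hδ₁, hδ₂, hδ₄, hδ₅, hδg, hT⟩
  have hD1 : D ≤ δ₁ := min_le_left _ _
  have hD2 : D ≤ δ₂ := le_trans (min_le_right _ _) (min_le_left _ _)
  have hD4 : D ≤ δ₄ := le_trans (min_le_right _ _) (le_trans (min_le_right _ _) (min_le_left _ _))
  have hD5 : D ≤ δ₅ := le_trans (min_le_right _ _) (le_trans (min_le_right _ _)
    (le_trans (min_le_right _ _) (min_le_left _ _)))
  have hDg : D ≤ δg := le_trans (min_le_right _ _) (le_trans (min_le_right _ _)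
    (le_trans (min_le_right _ _) (le_trans (min_le_right _ _) (min_le_left _ _))))
  have hDT : D ≤ T := le_trans (min_le_right _ _) (le_trans (min_le_right _ _)
    (le_trans (min_le_right _ _) (le_trans (min_le_right _ _) (min_le_right _ _))))
  refine ⟨D/2, by positivity, by linarith, ?_⟩
  intro t ht htD
  have htT : t < T := by linarith
  have htδ₁ : t < δ₁ := by linarith
  have htδ₂ : t ≤ δ₂/2 := by linarith
  have htδ₄ : t < δ₄ := by linarith
  have htδ₅ : t < δ₅ := by linarith
  have htδg : t < δg := by linarith
  -- the pre-history at time t is in H¹(-h,0)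
  have hprecont : ContinuousOn (fun s => x (t + s)) (Icc (-h) (0:ℝ)) := by
    apply hcx.comp ((continuous_const.add continuous_id).continuousOn)
    intro s hs
    exact ⟨by simpa using by linarith [hs.1], by simpa using by linarith [hs.2]⟩
  have hpre : MemH1 (-h) 0 (prehist x t) (fun s => xd (t + s)) :=
    { contOn := hprecont
      memL2 := by
        apply MemLp.of_bound
          ((hprecont.mono Ioo_subset_Icc_self).aestronglyMeasurable measurableSet_Ioo) K
        rw [ae_restrict_iff' measurableSet_Ioo]
        refine ae_of_all _ fun s hs => hK _ ⟨by linarith [hs.1], by linarith [hs.2]⟩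
      derivMemL2 := by
        have h1 : MemLp (fun s => ψ (s + t)) 2 volume :=
          hψ.comp_measurePreserving (measurePreserving_add_right volume t)
        refine MemLp.ae_eq ?_ (h1.restrict (Ioo (-h) (0:ℝ)))
        filter_upwards [self_mem_ae_restrict measurableSet_Ioo] with s hs
        rw [add_comm s t]
        exact hψeq (t + s) ⟨by linarith [hs.1], by linarith [hs.2]⟩
      ftc := by
        intro u hu
        show x (t + u) = x (t + -h) + ∫ s in (-h)..u, xd (t + s)
        have e1 := hxH1.ftc (t + u) ⟨by linarith [hu.1], by linarith [hu.2]⟩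
        have e2 := hxH1.ftc (t + -h) ⟨by linarith, by linarith⟩
        rw [intervalIntegral.integral_comp_add_left, e1, e2,
          ← intervalIntegral.integral_interval_sub_left
            (hII (-h) (t + u) ⟨le_refl _, by linarith⟩
              ⟨by linarith [hu.1], by linarith [hu.2]⟩)
            (hII (-h) (t + -h) ⟨le_refl _, by linarith⟩ ⟨by linarith, by linarith⟩)]
        abel
      }
  -- H¹ bound on prehist x t - φ
  have hrle := hr_lip (prehist x t) (fun s => xd (t + s)) φ xd hpre hφx
  have hI1 : (∫ s in Ioo (-h) (0:ℝ), ‖(prehist x t - φ) s‖ ^ 2) ≤ ρ^2/2 := by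
    have hb : ∀ s ∈ Ioo (-h) (0:ℝ), ‖‖(prehist x t - φ) s‖ ^ 2‖ ≤ ω^2 := by
      intro s hs
      have hsI : s ∈ Icc (-h) (0:ℝ) := Ioo_subset_Icc_self hs
      have hxx : ‖x (t + s) - x s‖ < ω := by
        apply hUC₄ (t + s) ⟨by linarith [hs.1], by linarith [hs.2]⟩ s
          ⟨hs.1.le, by linarith [hs.2]⟩
        rw [show t + s - s = t by ring, abs_of_pos ht]
        exact htδ₄
      rw [Real.norm_eq_abs, abs_of_nonneg (by positivity)]
      simp only [Pi.sub_apply, prehist]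
      rw [← hxinit s hsI]
      exact pow_le_pow_left₀ (norm_nonneg _) hxx.le 2
    have hc : (∫ s in Ioo (-h) (0:ℝ), ‖(prehist x t - φ) s‖ ^ 2)
        ≤ ω^2 * (volume (Ioo (-h) (0:ℝ))).toReal :=
      le_trans (Real.le_norm_self _)
        (norm_setIntegral_le_of_norm_le_const measure_Ioo_lt_top hb)
    have hvol : (volume (Ioo (-h) (0:ℝ))).toReal = h := by
      rw [Real.volume_Ioo, ENNReal.toReal_ofReal (by linarith)]
      ring
    have hω2 : ω^2 = ρ^2 / (2*h) := Real.sq_sqrt (by positivity)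
    rw [hvol, hω2] at hc
    calc (∫ s in Ioo (-h) (0:ℝ), ‖(prehist x t - φ) s‖ ^ 2) ≤ ρ^2/(2*h) * h := hc
      _ = ρ^2/2 := by field_simp
  have hI2 : (∫ s in Ioo (-h) (0:ℝ), ‖((fun s => xd (t + s)) - xd) s‖ ^ 2) ≤ ρ^2/2 := by
    have hI2eq : (∫ s in Ioo (-h) (0:ℝ), ‖((fun s => xd (t + s)) - xd) s‖ ^ 2)
        = ∫ s in Ioo (-h) (0:ℝ), ‖ψ (s + t) - ψ s‖ ^ 2 := by
      apply setIntegral_congr_fun measurableSet_Ioo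
      intro s hs
      simp only [Pi.sub_apply]
      rw [add_comm s t, hψeq (t + s) ⟨by linarith [hs.1], by linarith [hs.2]⟩,
        hψeq s ⟨hs.1, hs.2.trans hT⟩]
    have hm : MemLp (fun s => ψ (s + t) - ψ s) 2 volume :=
      (hψ.comp_measurePreserving (measurePreserving_add_right volume t)).sub hψ
    have hint2 : Integrable (fun s => ‖ψ (s + t) - ψ s‖ ^ 2) volume := by
      have h3 := hm.integrable_norm_rpow two_ne_zero ENNReal.ofNat_ne_top
      refine h3.congr (ae_of_all _ fun s => ?_)
      show ‖ψ (s + t) - ψ s‖ ^ ((2:ℝ≥0∞)).toReal = ‖ψ (s + t) - ψ s‖ ^ (2:ℕ)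
      rw [ENNReal.toReal_ofNat, show ((2:ℝ)) = ((2:ℕ):ℝ) by norm_num, Real.rpow_natCast]
    calc (∫ s in Ioo (-h) (0:ℝ), ‖((fun s => xd (t + s)) - xd) s‖ ^ 2)
        = ∫ s in Ioo (-h) (0:ℝ), ‖ψ (s + t) - ψ s‖ ^ 2 := hI2eq
      _ ≤ ∫ s, ‖ψ (s + t) - ψ s‖ ^ 2 :=
          setIntegral_le_integral hint2 (ae_of_all _ fun s => by positivity)
      _ ≤ ρ^2/2 := hshift t (by rw [abs_of_pos ht]; exact htδ₅)
  have hH : H1norm (-h) 0 (prehist x t - φ) ((fun s => xd (t + s)) - xd) ≤ ρ := by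
    rw [H1norm]
    calc Real.sqrt ((∫ s in Ioo (-h) (0:ℝ), ‖(prehist x t - φ) s‖ ^ 2)
          + ∫ s in Ioo (-h) (0:ℝ), ‖((fun s => xd (t + s)) - xd) s‖ ^ 2)
        ≤ Real.sqrt (ρ^2) := Real.sqrt_le_sqrt (by linarith)
      _ = ρ := Real.sqrt_sq hρ.le
  have hHnn : 0 ≤ H1norm (-h) 0 (prehist x t - φ) ((fun s => xd (t + s)) - xd) :=
    Real.sqrt_nonneg _
  have hrd : |r (prehist x t) - r φ| ≤ δ₂/4 := by
    calc |r (prehist x t) - r φ|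
        ≤ Lr * H1norm (-h) 0 (prehist x t - φ) ((fun s => xd (t + s)) - xd) := hrle
      _ ≤ Lr' * H1norm (-h) 0 (prehist x t - φ) ((fun s => xd (t + s)) - xd) := by
          apply mul_le_mul_of_nonneg_right _ hHnn
          have : Lr ≤ max Lr 0 := le_max_left _ _
          linarith
      _ ≤ Lr' * ρ := by
          exact mul_le_mul_of_nonneg_left hH hLr'pos.le
      _ = δ₂/4 := by
          rw [hρdef]; field_simp
  -- the delayed argument stays close
  have hθmem : t + r (prehist x t) ∈ Icc (-h) T :=
    ⟨by linarith [(hr_range (prehist x t)).1], by linarith [(hr_range (prehist x t)).2]⟩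
  have hrφmem : r φ ∈ Icc (-h) T := ⟨(hr_range φ).1, le_trans (hr_range φ).2 hT.le⟩
  have hxθ : ‖x (t + r (prehist x t)) - x (r φ)‖ < δg := by
    apply hUC₂ _ hθmem _ hrφmem
    have habs : |t + r (prehist x t) - r φ| ≤ |t| + |r (prehist x t) - r φ| := by
      rw [show t + r (prehist x t) - r φ = t + (r (prehist x t) - r φ) by ring]
      exact abs_add_le _ _
    rw [abs_of_pos ht] at habs
    linarith
  have hxt0 : ‖x t - x 0‖ < δg := by
    apply hUC₂ t ⟨by linarith, htT.le⟩ 0 ⟨by linarith, hT.le⟩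
    rw [sub_zero, abs_of_pos ht]
    linarith
  -- the derivative term
  have hderiv : ‖xd t - g 0 (φ 0) (φ (r φ))‖ ≤ ε/2 := by
    rw [hxeq t ⟨ht, htT⟩]
    have hmem : ((t, (x t, x (t + r (prehist x t)))) : ℝ ×
        (EuclideanSpace ℝ (Fin n) × EuclideanSpace ℝ (Fin n))) ∈ Icc (0:ℝ) T ×ˢ
        (univ : Set (EuclideanSpace ℝ (Fin n) × EuclideanSpace ℝ (Fin n))) :=
      ⟨⟨ht.le, htT.le⟩, trivial⟩
    have hdlt : dist ((t, (x t, x (t + r (prehist x t)))) : ℝ ×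
        (EuclideanSpace ℝ (Fin n) × EuclideanSpace ℝ (Fin n)))
        ((0:ℝ), (φ 0, φ (r φ))) < δg := by
      rw [Prod.dist_eq, Prod.dist_eq]
      apply max_lt
      · rw [Real.dist_eq, sub_zero, abs_of_pos ht]; exact htδg
      apply max_lt
      · rw [dist_eq_norm, ← hxinit 0 ⟨by linarith, le_refl _⟩]
        exact hxt0
      · rw [dist_eq_norm, ← hxinit (r φ) (hr_range φ)]
        exact hxθ
    have := hg2 hmem hdlt
    rw [dist_eq_norm] at this
    exact this.le
  -- the sup term
  have hsup : (⨆ s : Icc (-h) (0:ℝ), ‖x ((s:ℝ) + t) - φ (s:ℝ)‖) ≤ ε/2 := by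
    haveI : Nonempty (Icc (-h) (0:ℝ)) := ⟨⟨0, by constructor <;> linarith⟩⟩
    apply ciSup_le
    rintro ⟨s, hs⟩
    simp only
    rw [← hxinit s hs]
    apply le_of_lt
    apply hUC₁ (s + t) ⟨by linarith [hs.1], by linarith [hs.2]⟩ s ⟨hs.1, by linarith [hs.2]⟩
    rw [show s + t - s = t by ring, abs_of_pos ht]
    exact htδ₁
  linarith
end

section
/- Let 0 < ε < K, let g : ℝ² → ℝ be Lipschitz continuous with ε ≤ g(y,p) ≤ K for all y, p ∈ ℝ, let x₁ < x₂ be real numbers, and let h > 0 be large enough that εh ≥ x₂ − x₁. For ψ ∈ H¹(−h,0), let y_ψ be the unique solution of the ODE y′(s) = −g(y(s), ψ(−s)), y(0) = x₂, on [0,h] (which exists by Picard–Lindelöf, using the continuous representative of ψ), and let r(ψ) ∈ [0,h] be the unique time with y_ψ(r(ψ)) = x₁. Then the map r : H¹(−h,0) → [0,h] is Lipschitz continuous; indeed ε|r(φ) − r(ψ)| ≤ C‖φ − ψ‖_{L₂} ≤ C‖φ − ψ‖_{H¹} for some constant C depending only on h and the Lipschitz constant of g. -/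
open MeasureTheory Set Filter

private lemma stmt18_key (ε Lg x₁ x₂ h : ℝ) (hLg : 0 ≤ Lg) (hh : 0 < h)
    (g : ℝ → ℝ → ℝ)
    (hg_lip : ∀ y₁ p₁ y₂ p₂, |g y₁ p₁ - g y₂ p₂| ≤ Lg * (|y₁ - y₂| + |p₁ - p₂|))
    (hg_lb : ∀ y p, ε ≤ g y p)
    (φ ψ : ℝ → ℝ) (hφc : ContinuousOn φ (Icc (-h) 0)) (hψc : ContinuousOn ψ (Icc (-h) 0))
    (yφ yψ : ℝ → ℝ) (hyφc : ContinuousOn yφ (Icc 0 h)) (hyψc : ContinuousOn yψ (Icc 0 h))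
    (hyφ : ∀ s ∈ Icc (0:ℝ) h, yφ s = x₂ - ∫ τ in (0:ℝ)..s, g (yφ τ) (φ (-τ)))
    (hyψ : ∀ s ∈ Icc (0:ℝ) h, yψ s = x₂ - ∫ τ in (0:ℝ)..s, g (yψ τ) (ψ (-τ)))
    (rφ rψ : ℝ) (hrφ : rφ ∈ Icc (0:ℝ) h) (hrψ : rψ ∈ Icc (0:ℝ) h)
    (hvφ : yφ rφ = x₁) (hvψ : yψ rψ = x₁) (hle : rφ ≤ rψ) :
    ε * (rψ - rφ) ≤ Lg * Real.exp (Lg * h) * ∫ t in (-h)..(0:ℝ), |φ t - ψ t| := by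
  -- clamp to [0,h]
  set cl : ℝ → ℝ := fun s => max 0 (min s h) with hcl_def
  have hcl_cont : Continuous cl := continuous_const.max (continuous_id.min continuous_const)
  have hcl_mem : ∀ s, cl s ∈ Icc (0:ℝ) h :=
    fun s => ⟨le_max_left _ _, max_le hh.le (min_le_right _ _)⟩
  have hcl_id : ∀ s ∈ Icc (0:ℝ) h, cl s = s := by
    intro s hs
    simp [hcl_def, min_eq_left hs.2, max_eq_right hs.1]
  have hcl_neg_mem : ∀ s, -cl s ∈ Icc (-h) (0:ℝ) :=
    fun s => ⟨neg_le_neg (hcl_mem s).2, neg_nonpos.mpr (hcl_mem s).1⟩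
  -- continuous global versions
  set Yφ : ℝ → ℝ := fun s => yφ (cl s) with hYφ_def
  set Yψ : ℝ → ℝ := fun s => yψ (cl s) with hYψ_def
  set Φ : ℝ → ℝ := fun s => φ (-cl s) with hΦ_def
  set Ψ : ℝ → ℝ := fun s => ψ (-cl s) with hΨ_def
  have hYφc : Continuous Yφ := hyφc.comp_continuous hcl_cont hcl_mem
  have hYψc : Continuous Yψ := hyψc.comp_continuous hcl_cont hcl_mem
  have hΦc : Continuous Φ := hφc.comp_continuous hcl_cont.neg hcl_neg_mem
  have hΨc : Continuous Ψ := hψc.comp_continuous hcl_cont.neg hcl_neg_mem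
  -- continuity of g
  have hgc : Continuous (fun p : ℝ × ℝ => g p.1 p.2) := by
    have : LipschitzWith (Real.toNNReal (2 * Lg)) (fun p : ℝ × ℝ => g p.1 p.2) := by
      apply LipschitzWith.of_dist_le_mul
      rintro ⟨y₁, p₁⟩ ⟨y₂, p₂⟩
      have h1 : dist y₁ y₂ ≤ dist (y₁, p₁) (y₂, p₂) := by
        rw [Prod.dist_eq]; exact le_max_left _ _
      have h2 : dist p₁ p₂ ≤ dist (y₁, p₁) (y₂, p₂) := by
        rw [Prod.dist_eq]; exact le_max_right _ _
      have h3 := hg_lip y₁ p₁ y₂ p₂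
      have h4 : (0:ℝ) ≤ dist (y₁, p₁) (y₂, p₂) := dist_nonneg
      rw [Real.coe_toNNReal _ (by positivity)]
      simp only [Real.dist_eq] at *
      nlinarith
    exact this.continuous
  set Fφ : ℝ → ℝ := fun τ => g (Yφ τ) (Φ τ) with hFφ_def
  set Fψ : ℝ → ℝ := fun τ => g (Yψ τ) (Ψ τ) with hFψ_def
  have hFφc : Continuous Fφ := hgc.comp (hYφc.prodMk hΦc)
  have hFψc : Continuous Fψ := hgc.comp (hYψc.prodMk hΨc)
  set u : ℝ → ℝ := fun s => |Yφ s - Yψ s| with hu_def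
  set d : ℝ → ℝ := fun s => |Φ s - Ψ s| with hd_def
  have huc : Continuous u := (hYφc.sub hYψc).abs
  have hdc : Continuous d := (hΦc.sub hΨc).abs
  set U : ℝ → ℝ := fun s => ∫ τ in (0:ℝ)..s, u τ with hU_def
  set A : ℝ := ∫ τ in (0:ℝ)..h, d τ with hA_def
  have hA0 : 0 ≤ A := intervalIntegral.integral_nonneg hh.le fun x _ => abs_nonneg _
  -- rewriting the integral equations with clamped integrands
  have hIφ : ∀ s ∈ Icc (0:ℝ) h, (∫ τ in (0:ℝ)..s, g (yφ τ) (φ (-τ))) = ∫ τ in (0:ℝ)..s, Fφ τ := by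
    intro s hs
    apply intervalIntegral.integral_congr
    intro τ hτ
    rw [Set.uIcc_of_le hs.1] at hτ
    have : cl τ = τ := hcl_id τ ⟨hτ.1, hτ.2.trans hs.2⟩
    simp [hFφ_def, hYφ_def, hΦ_def, this]
  have hIψ : ∀ s ∈ Icc (0:ℝ) h, (∫ τ in (0:ℝ)..s, g (yψ τ) (ψ (-τ))) = ∫ τ in (0:ℝ)..s, Fψ τ := by
    intro s hs
    apply intervalIntegral.integral_congr
    intro τ hτ
    rw [Set.uIcc_of_le hs.1] at hτ
    have : cl τ = τ := hcl_id τ ⟨hτ.1, hτ.2.trans hs.2⟩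
    simp [hFψ_def, hYψ_def, hΨ_def, this]
  -- claim 1
  have step1 : ∀ s ∈ Icc (0:ℝ) h, u s ≤ Lg * U s + Lg * A := by
    intro s hs
    have hus : u s = |yφ s - yψ s| := by simp [hu_def, hYφ_def, hYψ_def, hcl_id s hs]
    have hdiff : yφ s - yψ s = ∫ τ in (0:ℝ)..s, (Fψ τ - Fφ τ) := by
      rw [hyφ s hs, hyψ s hs, hIφ s hs, hIψ s hs,
        intervalIntegral.integral_sub (hFψc.intervalIntegrable _ _) (hFφc.intervalIntegrable _ _)]
      ring
    have habs : |yφ s - yψ s| ≤ ∫ τ in (0:ℝ)..s, |Fψ τ - Fφ τ| := by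
      rw [hdiff]
      exact intervalIntegral.abs_integral_le_integral_abs hs.1
    have hpt : ∀ τ, |Fψ τ - Fφ τ| ≤ Lg * (u τ + d τ) := by
      intro τ
      have := hg_lip (Yψ τ) (Ψ τ) (Yφ τ) (Φ τ)
      rw [abs_sub_comm (Yψ τ) (Yφ τ), abs_sub_comm (Ψ τ) (Φ τ)] at this
      exact this
    have hmono : (∫ τ in (0:ℝ)..s, |Fψ τ - Fφ τ|) ≤ ∫ τ in (0:ℝ)..s, Lg * (u τ + d τ) := by
      apply intervalIntegral.integral_mono_on hs.1
        ((hFψc.sub hFφc).abs.intervalIntegrable _ _)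
        ((continuous_const.mul (huc.add hdc)).intervalIntegrable _ _)
      exact fun x _ => hpt x
    have hsplit : (∫ τ in (0:ℝ)..s, Lg * (u τ + d τ))
        = Lg * U s + Lg * ∫ τ in (0:ℝ)..s, d τ := by
      rw [intervalIntegral.integral_const_mul,
        intervalIntegral.integral_add (huc.intervalIntegrable _ _) (hdc.intervalIntegrable _ _)]
      ring
    have hdA : (∫ τ in (0:ℝ)..s, d τ) ≤ A := by
      apply intervalIntegral.integral_mono_interval le_rfl hs.1 hs.2
        (ae_of_all _ fun x => abs_nonneg _) (hdc.intervalIntegrable _ _)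
    have : Lg * (∫ τ in (0:ℝ)..s, d τ) ≤ Lg * A := mul_le_mul_of_nonneg_left hdA hLg
    rw [hus]
    linarith [habs.trans (hmono.trans_eq hsplit)]
  -- Gronwall
  have hU' : ∀ x : ℝ, HasDerivAt U (u x) x := fun x =>
    intervalIntegral.integral_hasDerivAt_right (huc.intervalIntegrable _ _)
      (huc.stronglyMeasurableAtFilter _ _) huc.continuousAt
  have hUc : Continuous U := by
    rw [continuous_iff_continuousAt]; exact fun x => (hU' x).continuousAt
  have hUnn : ∀ x ∈ Icc (0:ℝ) h, 0 ≤ U x := fun x hx =>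
    intervalIntegral.integral_nonneg hx.1 fun t _ => abs_nonneg _
  have grw := norm_le_gronwallBound_of_norm_deriv_right_le (f := U) (f' := u)
    (δ := 0) (K := Lg) (ε := Lg * A) (a := 0) (b := h) hUc.continuousOn
    (fun x _ => (hU' x).hasDerivWithinAt) (by simp [hU_def]) ?bnd
  case bnd =>
    intro x hx
    have hx' : x ∈ Icc (0:ℝ) h := Ico_subset_Icc_self hx
    have := step1 x hx'
    rw [Real.norm_eq_abs, Real.norm_eq_abs, abs_abs, abs_of_nonneg (hUnn x hx')]
    exact this
  have step2 : ∀ s ∈ Icc (0:ℝ) h, u s ≤ Lg * A * Real.exp (Lg * h) := by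
    intro s hs
    have h1 := step1 s hs
    have h2 := grw s hs
    rw [Real.norm_eq_abs, abs_of_nonneg (hUnn s hs)] at h2
    have h3 : u s ≤ Lg * gronwallBound 0 Lg (Lg * A) (s - 0) + Lg * A := by
      have := mul_le_mul_of_nonneg_left h2 hLg
      linarith
    rcases eq_or_lt_of_le hLg with hLg0 | hLgpos
    · simp [← hLg0] at h3 ⊢
      simpa [← hLg0] using h3
    · rw [gronwallBound_of_K_ne_0 hLgpos.ne'] at h3
      have hexp : Real.exp (Lg * s) ≤ Real.exp (Lg * h) :=
        Real.exp_le_exp.mpr (mul_le_mul_of_nonneg_left hs.2 hLg)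
      have hdiv : Lg * A / Lg = A := by field_simp
      rw [hdiv] at h3
      have hexp1 : (0:ℝ) < Real.exp (Lg * s) := Real.exp_pos _
      calc u s ≤ Lg * (0 * Real.exp (Lg * (s - 0)) + A * (Real.exp (Lg * (s - 0)) - 1)) + Lg * A := h3
        _ = Lg * A * Real.exp (Lg * s) := by ring_nf
        _ ≤ Lg * A * Real.exp (Lg * h) := mul_le_mul_of_nonneg_left hexp (by positivity)
  -- threshold step
  have hIψφ : (∫ τ in rφ..rψ, Fψ τ) = yψ rφ - yψ rψ := by
    have e1 := hyψ rφ hrφ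
    have e2 := hyψ rψ hrψ
    rw [hIψ rφ hrφ] at e1
    rw [hIψ rψ hrψ] at e2
    rw [e1, e2, ← intervalIntegral.integral_interval_sub_left
      (hFψc.intervalIntegrable _ _) (hFψc.intervalIntegrable _ _)]
    ring
  have hlow : ε * (rψ - rφ) ≤ ∫ τ in rφ..rψ, Fψ τ := by
    have := intervalIntegral.integral_mono_on hle ((intervalIntegrable_const (μ := volume) (c := ε)))
      (hFψc.intervalIntegrable _ _) (fun x _ => hg_lb (Yψ x) (Ψ x))
    simpa [mul_comm] using this
  have hfin : ε * (rψ - rφ) ≤ Lg * A * Real.exp (Lg * h) := by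
    have h5 : yψ rφ - yψ rψ ≤ u rφ := by
      have : u rφ = |yφ rφ - yψ rφ| := by simp [hu_def, hYφ_def, hYψ_def, hcl_id rφ hrφ]
      rw [this, hvψ, ← hvφ]
      rw [abs_sub_comm]
      exact le_abs_self _
    have := step2 rφ hrφ
    linarith [hlow.trans_eq hIψφ]
  -- identify A with the stated integral
  have hAeq : A = ∫ t in (-h)..(0:ℝ), |φ t - ψ t| := by
    have : A = ∫ τ in (0:ℝ)..h, |φ (-τ) - ψ (-τ)| := by
      apply intervalIntegral.integral_congr
      intro τ hτ
      rw [Set.uIcc_of_le hh.le] at hτ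
      simp [hd_def, hΦ_def, hΨ_def, hcl_id τ hτ]
    rw [this]
    rw [intervalIntegral.integral_comp_neg (f := fun t => |φ t - ψ t|)]
    norm_num
  calc ε * (rψ - rφ) ≤ Lg * A * Real.exp (Lg * h) := hfin
    _ = Lg * Real.exp (Lg * h) * ∫ t in (-h)..(0:ℝ), |φ t - ψ t| := by rw [hAeq]; ring

/-- **Global Lipschitz continuity of the threshold-type delay functional** (Theorem 6.2).
Let `0 < ε < K`, `g : ℝ² → ℝ` Lipschitz with `ε ≤ g ≤ K`, `x₁ < x₂` and `εh ≥ x₂ - x₁`.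
For `ψ ∈ H¹(-h,0)` let `y_ψ` solve `y' = -g(y(s), ψ(-s))`, `y(0) = x₂` and let
`r(ψ) ∈ [0,h]` be the unique time with `y_ψ(r(ψ)) = x₁`. Then there is a constant `C`
(depending only on `h` and the Lipschitz constant of `g`) with
`ε |r(φ) - r(ψ)| ≤ C ‖φ - ψ‖_{L₂} ≤ C ‖φ - ψ‖_{H¹}` for all `φ, ψ ∈ H¹(-h,0)`. -/
theorem stmt18 (ε K : ℝ) (hε : 0 < ε) (hεK : ε < K)
    (g : ℝ → ℝ → ℝ) (Lg : ℝ) (hLg : 0 ≤ Lg)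
    (hg_lip : ∀ y₁ p₁ y₂ p₂, |g y₁ p₁ - g y₂ p₂| ≤ Lg * (|y₁ - y₂| + |p₁ - p₂|))
    (hg_bd : ∀ y p, ε ≤ g y p ∧ g y p ≤ K)
    (x₁ x₂ : ℝ) (hx : x₁ < x₂) (h : ℝ) (hh : 0 < h) (hεh : x₂ - x₁ ≤ ε * h) :
    ∃ C : ℝ, 0 ≤ C ∧ ∀ φ φd ψ ψd : ℝ → ℝ, MemH1 (-h) 0 φ φd → MemH1 (-h) 0 ψ ψd →
      ∀ yφ yψ : ℝ → ℝ,
        ContinuousOn yφ (Set.Icc 0 h) →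
        (∀ s ∈ Set.Icc (0 : ℝ) h, yφ s = x₂ - ∫ τ in (0 : ℝ)..s, g (yφ τ) (φ (-τ))) →
        ContinuousOn yψ (Set.Icc 0 h) →
        (∀ s ∈ Set.Icc (0 : ℝ) h, yψ s = x₂ - ∫ τ in (0 : ℝ)..s, g (yψ τ) (ψ (-τ))) →
        ∀ rφ ∈ Set.Icc (0 : ℝ) h, ∀ rψ ∈ Set.Icc (0 : ℝ) h,
          yφ rφ = x₁ → yψ rψ = x₁ →
          ε * |rφ - rψ| ≤ C * Real.sqrt (∫ t in Set.Ioo (-h) (0 : ℝ), (φ t - ψ t) ^ 2) ∧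
          C * Real.sqrt (∫ t in Set.Ioo (-h) (0 : ℝ), (φ t - ψ t) ^ 2) ≤
            C * H1norm (-h) 0 (φ - ψ) (φd - ψd) := by
  refine ⟨Lg * Real.exp (Lg * h) * Real.sqrt h, by positivity, ?_⟩
  intro φ φd ψ ψd hφ hψ yφ yψ hyφc hyφ hyψc hyψ rφ hrφ rψ hrψ hvφ hvψ
  have hg_lb : ∀ y p, ε ≤ g y p := fun y p => (hg_bd y p).1
  set I : ℝ := ∫ t in Set.Ioo (-h) (0:ℝ), (φ t - ψ t) ^ 2 with hI_def
  have hI0 : 0 ≤ I := integral_nonneg fun t => sq_nonneg _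
  -- Cauchy–Schwarz
  have hCS : (∫ t in (-h)..(0:ℝ), |φ t - ψ t|) ≤ Real.sqrt h * Real.sqrt I := by
    have h2 : (ENNReal.ofReal 2) = 2 := by norm_num
    have hmem : MemLp (fun t => |φ t - ψ t|) 2 (volume.restrict (Set.Ioo (-h) (0:ℝ))) := by
      have := (hφ.memL2.sub hψ.memL2).norm
      simpa [Real.norm_eq_abs] using this
    have hone : MemLp (fun _ : ℝ => (1:ℝ)) 2 (volume.restrict (Set.Ioo (-h) (0:ℝ))) :=
      memLp_const 1
    have hpq : Real.HolderConjugate 2 2 := Real.holderConjugate_iff.mpr ⟨one_lt_two, by norm_num⟩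
    have hH := integral_mul_le_Lp_mul_Lq_of_nonneg hpq
      (f := fun t => |φ t - ψ t|) (g := fun _ => (1:ℝ))
      (ae_of_all _ fun t => abs_nonneg _) (ae_of_all _ fun _ => zero_le_one)
      (h2 ▸ hmem) (h2 ▸ hone)
    have e1 : (∫ t, |φ t - ψ t| * 1 ∂(volume.restrict (Set.Ioo (-h) (0:ℝ))))
        = ∫ t in Set.Ioo (-h) (0:ℝ), |φ t - ψ t| := by simp
    have e2 : (∫ t, |φ t - ψ t| ^ (2:ℝ) ∂(volume.restrict (Set.Ioo (-h) (0:ℝ)))) = I := by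
      rw [hI_def]
      apply integral_congr_ae
      filter_upwards with t
      rw [show ((2:ℝ)) = ((2:ℕ):ℝ) by norm_num, Real.rpow_natCast, sq_abs]
    have e3 : (∫ t, (1:ℝ) ^ (2:ℝ) ∂(volume.restrict (Set.Ioo (-h) (0:ℝ)))) = h := by
      simp [Real.volume_Ioo]
      norm_num
      linarith
    rw [e1, e2, e3] at hH
    have hIoc : (∫ t in (-h)..(0:ℝ), |φ t - ψ t|)
        = ∫ t in Set.Ioo (-h) (0:ℝ), |φ t - ψ t| := by
      rw [intervalIntegral.integral_of_le (by linarith), integral_Ioc_eq_integral_Ioo]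
    rw [hIoc, Real.sqrt_eq_rpow, Real.sqrt_eq_rpow]
    calc (∫ t in Set.Ioo (-h) (0:ℝ), |φ t - ψ t|) ≤ I ^ ((1:ℝ)/2) * h ^ ((1:ℝ)/2) := hH
      _ = h ^ ((1:ℝ)/2) * I ^ ((1:ℝ)/2) := mul_comm _ _
  constructor
  · have hkey : ε * |rφ - rψ| ≤ Lg * Real.exp (Lg * h) * ∫ t in (-h)..(0:ℝ), |φ t - ψ t| := by
      rcases le_total rφ rψ with hle | hle
      · have := stmt18_key ε Lg x₁ x₂ h hLg hh g hg_lip hg_lb φ ψ hφ.contOn hψ.contOn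
          yφ yψ hyφc hyψc hyφ hyψ rφ rψ hrφ hrψ hvφ hvψ hle
        rwa [abs_sub_comm, abs_of_nonneg (by linarith)]
      · have hsym := stmt18_key ε Lg x₁ x₂ h hLg hh g hg_lip hg_lb ψ φ hψ.contOn hφ.contOn
          yψ yφ hyψc hyφc hyψ hyφ rψ rφ hrψ hrφ hvψ hvφ hle
        have : (∫ t in (-h)..(0:ℝ), |ψ t - φ t|) = ∫ t in (-h)..(0:ℝ), |φ t - ψ t| :=
          intervalIntegral.integral_congr fun t _ => abs_sub_comm _ _
        rw [this] at hsym
        rwa [abs_of_nonneg (by linarith)]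
    calc ε * |rφ - rψ| ≤ Lg * Real.exp (Lg * h) * ∫ t in (-h)..(0:ℝ), |φ t - ψ t| := hkey
      _ ≤ Lg * Real.exp (Lg * h) * (Real.sqrt h * Real.sqrt I) :=
        mul_le_mul_of_nonneg_left hCS (by positivity)
      _ = Lg * Real.exp (Lg * h) * Real.sqrt h * Real.sqrt I := by ring
  · have hJ : 0 ≤ ∫ t in Set.Ioo (-h) (0:ℝ), ‖(φd - ψd) t‖ ^ 2 :=
      integral_nonneg fun t => by positivity
    have hEq : (∫ t in Set.Ioo (-h) (0:ℝ), ‖(φ - ψ) t‖ ^ 2) = I := by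
      rw [hI_def]
      apply integral_congr_ae
      filter_upwards with t
      simp [Real.norm_eq_abs, sq_abs]
    have : Real.sqrt I ≤ H1norm (-h) 0 (φ - ψ) (φd - ψd) := by
      rw [H1norm, hEq]
      exact Real.sqrt_le_sqrt (by linarith)
    exact mul_le_mul_of_nonneg_left this (by positivity)
end

section
/- Let c, w, w₊ > 0, h := (2w + 2w₊)/c, and 0 < α < min{c, w, w₊}. Let W_α := {φ ∈ H¹(−h,0) : −w+α ≤ φ(s) ≤ w₊−α for all s, and ‖φ′‖_{L_∞} ≤ c−α}. Then for every φ ∈ W_α there exists a unique s_φ ∈ [0,h] such that c·s_φ = φ(−s_φ) + φ(0) + 2w, and the map W_α ∋ φ ↦ s_φ ∈ [0,h] is Lipschitz continuous with |s_φ − s_ψ| ≤ (2/α)(h^{1/2} + h^{−1/2})‖φ − ψ‖_{H¹(−h,0)} for all φ, ψ ∈ W_α. -/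
open MeasureTheory Set Filter

lemma myFin (a b : ℝ) : IsFiniteMeasure (volume.restrict (Ioo a b)) :=
  ⟨by rw [Measure.restrict_apply_univ]; exact measure_Ioo_lt_top⟩

lemma holder12 {a b : ℝ} (hab : a ≤ b) {g : ℝ → ℝ}
    (hg : MemLp g 2 (volume.restrict (Ioo a b))) :
    ∫ t in Ioo a b, |g t| ≤ Real.sqrt (b - a) * Real.sqrt (∫ t in Ioo a b, g t ^ 2) := by
  haveI := myFin a b
  have hpq : Real.HolderConjugate 2 2 := Real.HolderConjugate.two_two
  have h1 : MemLp (fun t => |g t|) (ENNReal.ofReal 2) (volume.restrict (Ioo a b)) := by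
    rw [ENNReal.ofReal_ofNat]; exact hg.abs
  have h2 : MemLp (fun _ : ℝ => (1 : ℝ)) (ENNReal.ofReal 2) (volume.restrict (Ioo a b)) :=
    memLp_const 1
  have := integral_mul_le_Lp_mul_Lq_of_nonneg hpq
    (Filter.Eventually.of_forall (fun t => abs_nonneg (g t)))
    (Filter.Eventually.of_forall (fun _ => zero_le_one)) h1 h2
  simp only [mul_one] at this
  have e1 : ∫ t in Ioo a b, |g t| ^ (2:ℝ) = ∫ t in Ioo a b, g t ^ 2 := by
    refine integral_congr_ae (Filter.Eventually.of_forall fun t => ?_)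
    simp only [Real.rpow_two, sq_abs]
  have e2 : ∫ _t in Ioo a b, (1:ℝ) ^ (2:ℝ) = b - a := by
    simp [Real.volume_Ioo, ENNReal.toReal_ofReal (by linarith : (0:ℝ) ≤ b - a), hab]
  rw [e1, e2] at this
  calc ∫ t in Ioo a b, |g t| ≤ (∫ t in Ioo a b, g t ^ 2) ^ (1/(2:ℝ)) * (b - a) ^ (1/(2:ℝ)) := this
    _ = Real.sqrt (b - a) * Real.sqrt (∫ t in Ioo a b, g t ^ 2) := by
        rw [Real.sqrt_eq_rpow, Real.sqrt_eq_rpow, mul_comm]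

lemma MemH1.intInt {h : ℝ} {φ φd : ℝ → ℝ} (H : MemH1 (-h) 0 φ φd) {a b : ℝ}
    (ha : -h ≤ a) (hb : b ≤ 0) (hab : a ≤ b) : IntervalIntegrable φd volume a b := by
  haveI := myFin (-h) (0:ℝ)
  have hfin : IntegrableOn φd (Ioo (-h) 0) volume := H.derivMemL2.integrable one_le_two
  rw [intervalIntegrable_iff_integrableOn_Ioo_of_le hab]
  exact hfin.mono_set (Ioo_subset_Ioo ha hb)

lemma ftc_sub {h : ℝ} {φ φd : ℝ → ℝ} (H : MemH1 (-h) 0 φ φd) {s₁ s₂ : ℝ}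
    (h1 : s₁ ∈ Icc (-h) (0:ℝ)) (h2 : s₂ ∈ Icc (-h) (0:ℝ)) (hle : s₁ ≤ s₂) :
    φ s₂ - φ s₁ = ∫ t in Ioo s₁ s₂, φd t := by
  rw [H.ftc s₂ h2, H.ftc s₁ h1]
  have e := intervalIntegral.integral_interval_sub_left
    (H.intInt (le_refl _) h2.2 h2.1) (H.intInt (le_refl _) h1.2 h1.1)
  rw [show φ (-h) + (∫ s in (-h)..s₂, φd s) - (φ (-h) + ∫ s in (-h)..s₁, φd s)
      = (∫ s in (-h)..s₂, φd s) - ∫ s in (-h)..s₁, φd s by ring, e,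
    intervalIntegral.integral_of_le hle, integral_Ioc_eq_integral_Ioo]

lemma lipOn {h c α : ℝ} {φ φd : ℝ → ℝ} (H : MemH1 (-h) 0 φ φd)
    (hb : ∀ᵐ t ∂(volume.restrict (Ioo (-h) (0:ℝ))), |φd t| ≤ c - α) :
    ∀ s₁ ∈ Icc (-h) (0:ℝ), ∀ s₂ ∈ Icc (-h) (0:ℝ), |φ s₂ - φ s₁| ≤ (c - α) * |s₂ - s₁| := by
  haveI := myFin (-h) (0:ℝ)
  have hfin : IntegrableOn φd (Ioo (-h) 0) volume := H.derivMemL2.integrable one_le_two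
  have key : ∀ s₁ ∈ Icc (-h) (0:ℝ), ∀ s₂ ∈ Icc (-h) (0:ℝ), s₁ ≤ s₂ →
      |φ s₂ - φ s₁| ≤ (c - α) * (s₂ - s₁) := by
    intro s₁ h1 s₂ h2 hle
    rw [ftc_sub H h1 h2 hle]
    have habs : |∫ t in Ioo s₁ s₂, φd t| ≤ ∫ t in Ioo s₁ s₂, |φd t| := by
      simpa [Real.norm_eq_abs] using
        norm_integral_le_integral_norm (μ := volume.restrict (Ioo s₁ s₂)) φd
    have hmono : ∫ t in Ioo s₁ s₂, |φd t| ≤ ∫ _t in Ioo s₁ s₂, (c - α) := by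
      refine integral_mono_ae ((hfin.mono_set (Ioo_subset_Ioo h1.1 h2.2)).abs)
        (integrableOn_const measure_Ioo_lt_top.ne) ?_
      exact ae_restrict_of_ae_restrict_of_subset (Ioo_subset_Ioo h1.1 h2.2) hb
    have hconst : ∫ _t in Ioo s₁ s₂, (c - α) = (c - α) * (s₂ - s₁) := by
      rw [setIntegral_const, Real.volume_real_Ioo_of_le hle, smul_eq_mul]
      ring
    linarith
  intro s₁ h1 s₂ h2
  rcases le_total s₁ s₂ with hle | hle
  · rw [abs_of_nonneg (by linarith : (0:ℝ) ≤ s₂ - s₁)]; exact key s₁ h1 s₂ h2 hle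
  · rw [abs_sub_comm (φ s₂), abs_sub_comm s₂,
      abs_of_nonneg (by linarith : (0:ℝ) ≤ s₁ - s₂)]
    exact key s₂ h2 s₁ h1 hle

lemma keyEst {h c α : ℝ} (hc : 0 < c) {φ φd : ℝ → ℝ} (H : MemH1 (-h) 0 φ φd)
    (hb : ∀ᵐ t ∂(volume.restrict (Ioo (-h) (0:ℝ))), |φd t| ≤ c - α)
    {s s' : ℝ} (hs : s ∈ Icc (0:ℝ) h) (hs' : s' ∈ Icc (0:ℝ) h) :
    α * |s - s'| ≤ |(c * s - φ (-s)) - (c * s' - φ (-s'))| := by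
  have hmem : ∀ u ∈ Icc (0:ℝ) h, -u ∈ Icc (-h) (0:ℝ) :=
    fun u hu => ⟨neg_le_neg hu.2, neg_nonpos.2 hu.1⟩
  have l := lipOn H hb (-s') (hmem _ hs') (-s) (hmem _ hs)
  have e : |(-s) - (-s')| = |s - s'| := by rw [abs_sub_comm]; ring_nf
  rw [e] at l
  have tri := abs_sub_abs_le_abs_sub (c * (s - s')) (φ (-s) - φ (-s'))
  have e2 : c * (s - s') - (φ (-s) - φ (-s')) = (c * s - φ (-s)) - (c * s' - φ (-s')) := by ring
  rw [e2] at tri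
  have e3 : |c * (s - s')| = c * |s - s'| := by rw [abs_mul, abs_of_pos hc]
  rw [e3] at tri
  linarith

lemma supBound {h : ℝ} (hh : 0 < h) {f fd : ℝ → ℝ} (F : MemH1 (-h) 0 f fd) :
    ∀ t ∈ Icc (-h) (0:ℝ), |f t| ≤ (Real.sqrt h + 1 / Real.sqrt h) * H1norm (-h) 0 f fd := by
  haveI := myFin (-h) (0:ℝ)
  set A := ∫ t in Ioo (-h) (0:ℝ), f t ^ 2 with hAdef
  set B := ∫ t in Ioo (-h) (0:ℝ), fd t ^ 2 with hBdef
  have hA0 : 0 ≤ A := integral_nonneg fun t => sq_nonneg _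
  have hB0 : 0 ≤ B := integral_nonneg fun t => sq_nonneg _
  have hNeq : H1norm (-h) 0 f fd = Real.sqrt (A + B) := by
    unfold H1norm
    simp only [Real.norm_eq_abs, sq_abs, hAdef, hBdef]
  set N := H1norm (-h) 0 f fd with hN
  have hN0 : 0 ≤ N := by rw [hNeq]; exact Real.sqrt_nonneg _
  have hNA : Real.sqrt A ≤ N := by
    rw [hNeq]; exact Real.sqrt_le_sqrt (by linarith)
  have hNB : Real.sqrt B ≤ N := by
    rw [hNeq]; exact Real.sqrt_le_sqrt (by linarith)
  have hne : (Icc (-h) (0:ℝ)).Nonempty := nonempty_Icc.2 (by linarith)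
  obtain ⟨t₀, ht₀, hmin⟩ := isCompact_Icc.exists_isMinOn hne F.contOn.abs
  have hminle : ∀ t ∈ Icc (-h) (0:ℝ), |f t₀| ≤ |f t| := fun t ht => hmin ht
  have hsq : h * f t₀ ^ 2 ≤ A := by
    have hint : ∫ _t in Ioo (-h) (0:ℝ), f t₀ ^ 2 ≤ A := by
      refine setIntegral_mono_on (integrableOn_const measure_Ioo_lt_top.ne)
        F.memL2.integrable_sq measurableSet_Ioo fun x hx => ?_
      have := hminle x (Ioo_subset_Icc_self hx)
      nlinarith [sq_abs (f t₀), sq_abs (f x), abs_nonneg (f t₀)]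
    have : ∫ _t in Ioo (-h) (0:ℝ), f t₀ ^ 2 = h * f t₀ ^ 2 := by
      rw [setIntegral_const, Real.volume_real_Ioo_of_le (by linarith : -h ≤ (0:ℝ)), smul_eq_mul]
      ring_nf
    linarith
  have key0 : |f t₀| * Real.sqrt h ≤ Real.sqrt A := by
    rw [← Real.sqrt_sq_eq_abs, ← Real.sqrt_mul (sq_nonneg _)]
    exact Real.sqrt_le_sqrt (by nlinarith)
  have hdB : ∫ t in Ioo (-h) (0:ℝ), |fd t| ≤ Real.sqrt h * Real.sqrt B := by
    have := holder12 (by linarith : -h ≤ (0:ℝ)) F.derivMemL2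
    simpa using this
  intro t ht
  have hdiff : |f t - f t₀| ≤ ∫ s in Ioo (-h) (0:ℝ), |fd s| := by
    have hfin : IntegrableOn fd (Ioo (-h) 0) volume := F.derivMemL2.integrable one_le_two
    have gen : ∀ u ∈ Icc (-h) (0:ℝ), ∀ v ∈ Icc (-h) (0:ℝ), u ≤ v →
        |f v - f u| ≤ ∫ s in Ioo (-h) (0:ℝ), |fd s| := by
      intro u hu v hv huv
      rw [ftc_sub F hu hv huv]
      have habs : |∫ s in Ioo u v, fd s| ≤ ∫ s in Ioo u v, |fd s| := by
        simpa [Real.norm_eq_abs] using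
          norm_integral_le_integral_norm (μ := volume.restrict (Ioo u v)) fd
      have hmono : ∫ s in Ioo u v, |fd s| ≤ ∫ s in Ioo (-h) (0:ℝ), |fd s| := by
        refine setIntegral_mono_set hfin.abs
          (Filter.Eventually.of_forall fun s => abs_nonneg _) ?_
        exact HasSubset.Subset.eventuallyLE (Ioo_subset_Ioo hu.1 hv.2)
      linarith
    rcases le_total t₀ t with hle | hle
    · exact gen t₀ ht₀ t ht hle
    · rw [abs_sub_comm]; exact gen t ht t₀ ht₀ hle
  have h1 : |f t| ≤ |f t₀| + |f t - f t₀| := by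
    calc |f t| = |f t₀ + (f t - f t₀)| := by ring_nf
      _ ≤ |f t₀| + |f t - f t₀| := abs_add_le _ _
  have hs0 : 0 < Real.sqrt h := Real.sqrt_pos.2 hh
  have ht0N : |f t₀| ≤ (1 / Real.sqrt h) * N := by
    calc |f t₀| = (|f t₀| * Real.sqrt h) * (1 / Real.sqrt h) := by
          field_simp
      _ ≤ Real.sqrt A * (1 / Real.sqrt h) := by
          apply mul_le_mul_of_nonneg_right key0 (by positivity)
      _ ≤ N * (1 / Real.sqrt h) := by
          apply mul_le_mul_of_nonneg_right hNA (by positivity)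
      _ = (1 / Real.sqrt h) * N := mul_comm _ _
  have hBdN : Real.sqrt h * Real.sqrt B ≤ Real.sqrt h * N :=
    mul_le_mul_of_nonneg_left hNB (le_of_lt hs0)
  calc |f t| ≤ |f t₀| + |f t - f t₀| := h1
    _ ≤ (1 / Real.sqrt h) * N + Real.sqrt h * N := by linarith
    _ = (Real.sqrt h + 1 / Real.sqrt h) * N := by ring

/-- **The echo-location delay functional is well defined and Lipschitz on `W_α`**
(Theorem 6.3). For `c, w, w₊ > 0`, `h = (2w + 2w₊)/c` and `0 < α < min {c, w, w₊}`,
every `φ ∈ W_α` admits a unique `s_φ ∈ [0,h]` with `c s_φ = φ(-s_φ) + φ(0) + 2w`, and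
`φ ↦ s_φ` is Lipschitz: `|s_φ - s_ψ| ≤ (2/α)(h^{1/2} + h^{-1/2}) ‖φ - ψ‖_{H¹(-h,0)}`. -/
theorem stmt19 (c w wp : ℝ) (hc : 0 < c) (hw : 0 < w) (hwp : 0 < wp)
    (h : ℝ) (hdef : h = (2 * w + 2 * wp) / c)
    (α : ℝ) (hα0 : 0 < α) (hαc : α < c) (hαw : α < w) (hαwp : α < wp) :
    (∀ φ φd : ℝ → ℝ, MemH1 (-h) 0 φ φd →
      (∀ s ∈ Set.Icc (-h) (0 : ℝ), -w + α ≤ φ s ∧ φ s ≤ wp - α) →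
      (∀ᵐ t ∂(volume.restrict (Set.Ioo (-h) (0 : ℝ))), |φd t| ≤ c - α) →
      ∃ s, (s ∈ Set.Icc (0 : ℝ) h ∧ c * s = φ (-s) + φ 0 + 2 * w) ∧
        ∀ s', s' ∈ Set.Icc (0 : ℝ) h ∧ c * s' = φ (-s') + φ 0 + 2 * w → s' = s) ∧
    (∀ φ φd ψ ψd : ℝ → ℝ, MemH1 (-h) 0 φ φd → MemH1 (-h) 0 ψ ψd →
      (∀ s ∈ Set.Icc (-h) (0 : ℝ), -w + α ≤ φ s ∧ φ s ≤ wp - α) →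
      (∀ᵐ t ∂(volume.restrict (Set.Ioo (-h) (0 : ℝ))), |φd t| ≤ c - α) →
      (∀ s ∈ Set.Icc (-h) (0 : ℝ), -w + α ≤ ψ s ∧ ψ s ≤ wp - α) →
      (∀ᵐ t ∂(volume.restrict (Set.Ioo (-h) (0 : ℝ))), |ψd t| ≤ c - α) →
      ∀ sφ ∈ Set.Icc (0 : ℝ) h, ∀ sψ ∈ Set.Icc (0 : ℝ) h,
        c * sφ = φ (-sφ) + φ 0 + 2 * w → c * sψ = ψ (-sψ) + ψ 0 + 2 * w →
        |sφ - sψ| ≤ (2 / α) * (Real.sqrt h + 1 / Real.sqrt h) *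
          H1norm (-h) 0 (φ - ψ) (φd - ψd)) := by
  have hh : 0 < h := by
    rw [hdef]; positivity
  have hch : c * h = 2 * w + 2 * wp := by
    rw [hdef]; field_simp
  have hmem : ∀ u ∈ Icc (0:ℝ) h, -u ∈ Icc (-h) (0:ℝ) :=
    fun u hu => ⟨neg_le_neg hu.2, neg_nonpos.2 hu.1⟩
  constructor
  · -- existence and uniqueness
    intro φ φd H bφ dbφ
    set g : ℝ → ℝ := fun s => c * s - φ (-s) - φ 0 - 2 * w with hg
    have cont : ContinuousOn g (Icc 0 h) := by
      refine ContinuousOn.sub (ContinuousOn.sub (ContinuousOn.sub ?_ ?_) continuousOn_const)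
        continuousOn_const
      · exact (continuous_const.mul continuous_id).continuousOn
      · exact H.contOn.comp continuous_neg.continuousOn (fun u hu => hmem u hu)
    have h0mem : (0:ℝ) ∈ Icc (-h) (0:ℝ) := ⟨by linarith, le_refl _⟩
    have hhmem : (-h) ∈ Icc (-h) (0:ℝ) := ⟨le_refl _, by linarith⟩
    have hb0 : g 0 ≤ -(2*α) := by
      have := (bφ 0 h0mem).1
      simp only [hg, mul_zero, neg_zero]
      linarith
    have hbh : 2*α ≤ g h := by
      have h1 := (bφ (-h) hhmem).2
      have h2 := (bφ 0 h0mem).2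
      simp only [hg]
      linarith
    have hivt := intermediate_value_Icc (by linarith : (0:ℝ) ≤ h) cont
    have h0m : (0:ℝ) ∈ Icc (g 0) (g h) := ⟨by linarith, by linarith⟩
    obtain ⟨s, hs, hgs⟩ := hivt h0m
    have heq : c * s = φ (-s) + φ 0 + 2 * w := by
      have : g s = 0 := hgs
      simp only [hg] at this
      linarith
    refine ⟨s, ⟨hs, heq⟩, ?_⟩
    rintro s' ⟨hs', heq'⟩
    have key := keyEst hc H dbφ hs' hs
    have e0 : (c * s' - φ (-s')) - (c * s - φ (-s)) = 0 := by linarith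
    rw [e0, abs_zero] at key
    have : |s' - s| = 0 :=
      le_antisymm (by nlinarith [abs_nonneg (s' - s)]) (abs_nonneg _)
    have := abs_eq_zero.1 this
    linarith
  · -- Lipschitz
    intro φ φd ψ ψd Hφ Hψ bφ dbφ bψ dbψ sφ hsφ sψ hsψ eqφ eqψ
    have Hf : MemH1 (-h) 0 (φ - ψ) (φd - ψd) := by
      refine ⟨Hφ.contOn.sub Hψ.contOn, Hφ.memL2.sub Hψ.memL2,
        Hφ.derivMemL2.sub Hψ.derivMemL2, ?_⟩
      intro t ht
      have e := intervalIntegral.integral_sub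
        (Hφ.intInt (le_refl _) ht.2 ht.1) (Hψ.intInt (le_refl _) ht.2 ht.1)
      simp only [Pi.sub_apply]
      rw [Hφ.ftc t ht, Hψ.ftc t ht]
      rw [e]
      ring
    set N := H1norm (-h) 0 (φ - ψ) (φd - ψd) with hN
    set S := Real.sqrt h + 1 / Real.sqrt h with hS
    have hsup := supBound hh Hf
    have h1 : |(φ - ψ) 0| ≤ S * N := hsup 0 ⟨by linarith, le_refl _⟩
    have h2 : |(φ - ψ) (-sψ)| ≤ S * N := hsup (-sψ) (hmem _ hsψ)
    simp only [Pi.sub_apply] at h1 h2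
    have key := keyEst hc Hφ dbφ hsφ hsψ
    have e0 : (c * sφ - φ (-sφ)) - (c * sψ - φ (-sψ)) =
        (φ 0 - ψ 0) + (φ (-sψ) - ψ (-sψ)) := by linarith
    rw [e0] at key
    have habs : |(φ 0 - ψ 0) + (φ (-sψ) - ψ (-sψ))| ≤ 2 * (S * N) := by
      calc |(φ 0 - ψ 0) + (φ (-sψ) - ψ (-sψ))|
          ≤ |φ 0 - ψ 0| + |φ (-sψ) - ψ (-sψ)| := abs_add_le _ _
        _ ≤ 2 * (S * N) := by linarith
    have : α * |sφ - sψ| ≤ 2 * (S * N) := le_trans key habs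
    have hgoal : |sφ - sψ| ≤ (2 * (S * N)) / α := by
      rw [le_div_iff₀ hα0]
      nlinarith
    calc |sφ - sψ| ≤ (2 * (S * N)) / α := hgoal
      _ = (2 / α) * S * N := by ring
end
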